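/- arXiv:0901.4277 — 6 statements merged into one kernel-verified Lean document; each statement's English description precedes it below -/
import Mathlib

section
/- Let k be a field, n ≥ 1, and let J be an ideal of the polynomial ring k[x_1, x_2, ..., x_n] containing a polynomial f = g·x_1 + h, where g and h are polynomials not involving the variable x_1 and g is a non-zero divisor modulo J. Then J is a prime ideal if and only if the elimination ideal J ∩ k[x_2, ..., x_n] is a prime ideal. -/
open MvPolynomial

private lemma stillman_key {k : Type*} [CommRing k] {m : ℕ} (g h : MvPolynomial (Fin m) k)
    (p : MvPolynomial (Option (Fin m)) k) :
    ∃ (d : ℕ) (q : MvPolynomial (Fin m) k),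
      (rename (some : Fin m → Option (Fin m)) g) ^ d * p - rename some q ∈
        Ideal.span {rename (some : Fin m → Option (Fin m)) g * X none + rename some h} := by
  induction p using MvPolynomial.induction_on with
  | C a =>
    exact ⟨0, C a, by simp⟩
  | add p q hp hq =>
    obtain ⟨d1, q1, h1⟩ := hp
    obtain ⟨d2, q2, h2⟩ := hq
    refine ⟨d1 + d2, g ^ d2 * q1 + g ^ d1 * q2, ?_⟩
    have e : (rename (some : Fin m → Option (Fin m)) g) ^ (d1 + d2) * (p + q)
        - rename some (g ^ d2 * q1 + g ^ d1 * q2)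
        = (rename (some : Fin m → Option (Fin m)) g) ^ d2 *
            ((rename (some : Fin m → Option (Fin m)) g) ^ d1 * p - rename some q1)
          + (rename (some : Fin m → Option (Fin m)) g) ^ d1 *
            ((rename (some : Fin m → Option (Fin m)) g) ^ d2 * q - rename some q2) := by
      simp only [map_add, map_mul, map_pow]
      ring
    rw [e]
    exact Ideal.add_mem _ (Ideal.mul_mem_left _ _ h1) (Ideal.mul_mem_left _ _ h2)
  | mul_X p i hp =>
    obtain ⟨d, q, h1⟩ := hp
    cases i with
    | none =>
      refine ⟨d + 1, q * (-h), ?_⟩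
      have e : (rename (some : Fin m → Option (Fin m)) g) ^ (d + 1) * (p * X none)
          - rename some (q * (-h))
          = ((rename (some : Fin m → Option (Fin m)) g) ^ d * p) *
              (rename (some : Fin m → Option (Fin m)) g * X none + rename some h)
            - rename some h *
              ((rename (some : Fin m → Option (Fin m)) g) ^ d * p - rename some q) := by
        simp only [map_mul, map_neg, pow_succ]
        ring
      rw [e]
      exact Ideal.sub_mem _ (Ideal.mul_mem_left _ _ (Ideal.subset_span rfl))
        (Ideal.mul_mem_left _ _ h1)
    | some j =>
      refine ⟨d, q * X j, ?_⟩
      have e : (rename (some : Fin m → Option (Fin m)) g) ^ d * (p * X (some j))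
          - rename some (q * X j)
          = X (some j) * ((rename (some : Fin m → Option (Fin m)) g) ^ d * p
              - rename some q) := by
        simp only [map_mul, rename_X]
        ring
      rw [e]
      exact Ideal.mul_mem_left _ _ h1

/-- **Stillman's lemma.** Let `k` be a field and `k[x₁,…,xₙ]` (here with `n = m + 1 ≥ 1`,
the variable `x₁` being indexed by `none : Option (Fin m)` and the remaining variables by
`some i`). Suppose `J` contains `f = g·x₁ + h` where `g, h` do not involve `x₁` and `g` is a
non-zero divisor modulo `J`. Then `J` is prime iff the elimination ideal
`J ∩ k[x₂,…,xₙ]` is prime. -/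
theorem stmt0 (k : Type*) [Field k] (m : ℕ)
    (J : Ideal (MvPolynomial (Option (Fin m)) k))
    (g h : MvPolynomial (Fin m) k)
    (hf : rename (some : Fin m → Option (Fin m)) g * X none
        + rename (some : Fin m → Option (Fin m)) h ∈ J)
    (hg : Ideal.Quotient.mk J (rename (some : Fin m → Option (Fin m)) g)
        ∈ nonZeroDivisors (MvPolynomial (Option (Fin m)) k ⧸ J)) :
    J.IsPrime ↔ (J.comap (rename (some : Fin m → Option (Fin m)) :
        MvPolynomial (Fin m) k →ₐ[k] MvPolynomial (Option (Fin m)) k)).IsPrime := by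
  constructor
  · intro hJ
    exact hJ.comap _
  · intro hI
    set G : MvPolynomial (Option (Fin m)) k := rename (some : Fin m → Option (Fin m)) g with hG
    -- the span of f is contained in J
    have hspan : Ideal.span {G * X none + rename (some : Fin m → Option (Fin m)) h} ≤ J := by
      rw [Ideal.span_le, Set.singleton_subset_iff]; exact hf
    -- cancellation of powers of G modulo J
    have hcancel : ∀ (d : ℕ) (p : MvPolynomial (Option (Fin m)) k),
        G ^ d * p ∈ J → p ∈ J := by
      intro d p hp
      have h0 : (Ideal.Quotient.mk J p) * (Ideal.Quotient.mk J G) ^ d = 0 := by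
        rw [← map_pow, ← map_mul, mul_comm, Ideal.Quotient.eq_zero_iff_mem]
        exact hp
      have := (mem_nonZeroDivisors_iff.mp (pow_mem hg d)).2 _ h0
      rwa [Ideal.Quotient.eq_zero_iff_mem] at this
    constructor
    · intro hJtop
      apply hI.ne_top
      rw [hJtop]
      exact Ideal.eq_top_iff_one _ |>.mpr (by simp [Ideal.mem_comap])
    · intro p q hpq
      obtain ⟨d1, q1, h1⟩ := stillman_key g h p
      obtain ⟨d2, q2, h2⟩ := stillman_key g h q
      have h1' : G ^ d1 * p - rename some q1 ∈ J := hspan h1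
      have h2' : G ^ d2 * q - rename some q2 ∈ J := hspan h2
      have hprod : rename (some : Fin m → Option (Fin m)) (q1 * q2) ∈ J := by
        have e : rename (some : Fin m → Option (Fin m)) (q1 * q2)
            = G ^ (d1 + d2) * (p * q)
              - ((G ^ d1 * p - rename some q1) * (G ^ d2 * q)
                + rename some q1 * (G ^ d2 * q - rename some q2)) := by
          simp only [map_mul, pow_add]
          ring
        rw [e]
        exact Ideal.sub_mem _ (Ideal.mul_mem_left _ _ hpq)
          (Ideal.add_mem _ (Ideal.mul_mem_right _ _ h1') (Ideal.mul_mem_left _ _ h2'))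
      have hmem : q1 * q2 ∈ J.comap (rename (some : Fin m → Option (Fin m)) :
          MvPolynomial (Fin m) k →ₐ[k] MvPolynomial (Option (Fin m)) k) := hprod
      rcases hI.mem_or_mem hmem with hq1 | hq2
      · left
        apply hcancel d1
        have : G ^ d1 * p = (G ^ d1 * p - rename some q1) + rename some q1 := by ring
        rw [this]
        exact Ideal.add_mem _ h1' hq1
      · right
        apply hcancel d2
        have : G ^ d2 * q = (G ^ d2 * q - rename some q2) + rename some q2 := by ring
        rw [this]
        exact Ideal.add_mem _ h2' hq2
end

section
/- Let k be a field, n ≥ 3, and let a_1,...,a_{n-2}, b_1,...,b_{n-2} be nonzero elements of k. In the polynomial ring R = k[l, e_1,...,e_n, s_1,...,s_n] in 2n+1 variables, the ideal J generated by the n−2 quadric trinomials g_i = s_i·e_i + a_i·s_{n-1}·e_{n-1} + b_i·s_n·e_n (for i = 1,...,n−2) is a prime ideal. -/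
set_option linter.unusedSectionVars false

section PolyLemmas
open Polynomial

variable {B : Type*} [CommRing B] [IsDomain B]

/-- `e` is regular modulo `C e * X + C c` when `e` is prime and `e ∤ c`. -/
lemma reg_lemma {e c : B} (he : Prime e) (hc : ¬ e ∣ c) (h : Polynomial B)
    (hd : (C e * X + C c) ∣ C e * h) : (C e * X + C c) ∣ h := by
  obtain ⟨q, hq⟩ := hd
  haveI : (Ideal.span {e}).IsPrime := (Ideal.span_singleton_prime he.ne_zero).mpr he
  set π : B →+* B ⧸ Ideal.span {e} := Ideal.Quotient.mk (Ideal.span {e}) with hπ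
  have hmape : π e = 0 := by
    simp [hπ, Ideal.Quotient.eq_zero_iff_mem, Ideal.mem_span_singleton]
  have hmapc : π c ≠ 0 := by
    simp only [hπ, Ne, Ideal.Quotient.eq_zero_iff_mem, Ideal.mem_span_singleton]
    exact hc
  have h0 : (0 : Polynomial (B ⧸ Ideal.span {e})) = C (π c) * q.map π := by
    have := congrArg (Polynomial.map π) hq
    simpa [Polynomial.map_mul, Polynomial.map_add, hmape] using this
  have hq0 : q.map π = 0 := by
    rcases mul_eq_zero.mp h0.symm with h' | h'
    · exact absurd (by simpa using h') hmapc
    · exact h'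
  have hdvd : C e ∣ q := by
    rw [Polynomial.C_dvd_iff_dvd_coeff]
    intro i
    rw [← Ideal.mem_span_singleton]
    have := congrArg (fun p => Polynomial.coeff p i) hq0
    simpa [hπ, Ideal.Quotient.eq_zero_iff_mem] using this
  obtain ⟨q', hq'⟩ := hdvd
  refine ⟨q', ?_⟩
  have hCe : (C e : Polynomial B) ≠ 0 := by simpa using he.ne_zero
  apply mul_left_cancel₀ hCe
  rw [hq, hq']; ring

lemma reg_lemma_pow {e c : B} (he : Prime e) (hc : ¬ e ∣ c) (N : ℕ) (h : Polynomial B)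
    (hd : (C e * X + C c) ∣ C e ^ N * h) : (C e * X + C c) ∣ h := by
  induction N with
  | zero => simpa using hd
  | succ n ih =>
    apply ih
    apply reg_lemma he hc
    rw [pow_succ] at hd
    convert hd using 1; ring



lemma division_lemma (e c : B) (f : Polynomial B) :
    ∃ (N : ℕ) (q : Polynomial B) (r : B), C e ^ N * f = q * (C e * X + C c) + C r := by
  generalize hd : f.natDegree = d
  induction d using Nat.strong_induction_on generalizing f with
  | _ d ih =>
    rcases Nat.eq_zero_or_pos d with h0 | hpos
    · subst h0
      obtain ⟨r, rfl⟩ := Polynomial.natDegree_eq_zero.mp hd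
      exact ⟨0, 0, r, by ring⟩
    · set b := f.coeff d with hb
      set f' := C e * f - C b * X ^ (d - 1) * (C e * X + C c) with hf'
      have hx : (X : Polynomial B) ^ (d - 1) * X = X ^ d := by
        rw [← pow_succ]; congr 1; omega
      have hXd : (C b * X ^ (d - 1) * (C e * X + C c)) =
          C (b * e) * X ^ d + C (b * c) * X ^ (d - 1) := by
        rw [C_mul, C_mul, ← hx]; ring
      have hcoeff : ∀ m, d ≤ m → f'.coeff m = 0 := by
        intro m hm
        rw [hf', hXd]
        simp only [Polynomial.coeff_sub, Polynomial.coeff_add, Polynomial.coeff_C_mul,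
          Polynomial.coeff_X_pow]
        rcases eq_or_lt_of_le hm with rfl | hlt
        · rw [if_pos rfl, if_neg (by omega : ¬ d = d - 1), ← hb]
          ring
        · rw [if_neg (by omega : ¬ m = d), if_neg (by omega : ¬ m = d - 1),
            Polynomial.coeff_eq_zero_of_natDegree_lt (hd ▸ hlt)]
          ring
      have hdeg' : f'.natDegree < d := by
        rcases eq_or_ne f' 0 with h | h
        · simpa [h] using hpos
        · have hdg : f'.degree < (d : ℕ) := by
            rw [Polynomial.degree_lt_iff_coeff_zero]
            intro m hm
            exact hcoeff m (by exact_mod_cast hm)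
          exact (Polynomial.natDegree_lt_iff_degree_lt h).mpr hdg
      obtain ⟨N, q, r, hqr⟩ := ih f'.natDegree hdeg' f' rfl
      refine ⟨N + 1, q + C e ^ N * C b * X ^ (d - 1), r, ?_⟩
      rw [hf'] at hqr
      rw [pow_succ]
      linear_combination hqr

lemma natdeg_lin {e c : B} (he : e ≠ 0) : (C e * X + C c).natDegree = 1 :=
  Polynomial.natDegree_linear he

lemma prime_linear {e c : B} (he : Prime e) (hc : ¬ e ∣ c) :
    Prime (C e * X + C c) := by
  have hCe : (C e : Polynomial B) ≠ 0 := by simpa using he.ne_zero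
  have hp0 : (C e * X + C c) ≠ 0 := by
    intro h
    have := congrArg (fun p => Polynomial.coeff p 1) h
    simp at this
    exact he.ne_zero this
  refine ⟨hp0, ?_, ?_⟩
  · intro hu
    have h1 := Polynomial.natDegree_eq_zero_of_isUnit hu
    rw [natdeg_lin he.ne_zero] at h1
    omega
  · intro f g hfg
    obtain ⟨N1, q1, r1, h1⟩ := division_lemma e c f
    obtain ⟨N2, q2, r2, h2⟩ := division_lemma e c g
    have hdr : (C e * X + C c) ∣ C (r1 * r2) := by
      have key : C (r1 * r2) = C e ^ (N1 + N2) * (f * g)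
          - (C e * X + C c) * (q1 * (C e ^ N2 * g) + q2 * (C e ^ N1 * f)
            - q1 * q2 * (C e * X + C c)) := by
        rw [C_mul, pow_add]
        linear_combination (-(C e ^ N2 * g) + q2 * (C e * X + C c)) * h1 - C r1 * h2
      rw [key]
      exact dvd_sub (hfg.mul_left _) ⟨_, rfl⟩
    have hr12 : r1 * r2 = 0 := by
      by_contra hne
      obtain ⟨u, hu⟩ := hdr
      have hu0 : u ≠ 0 := by
        rintro rfl
        rw [mul_zero] at hu
        exact hne (Polynomial.C_eq_zero.mp hu)
      have hdeg := congrArg Polynomial.natDegree hu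
      rw [Polynomial.natDegree_C, Polynomial.natDegree_mul hp0 hu0,
        natdeg_lin he.ne_zero] at hdeg
      omega
    rcases mul_eq_zero.mp hr12 with h | h
    · left
      have hdvd : (C e * X + C c) ∣ C e ^ N1 * f := by
        rw [h1, h, map_zero, add_zero]
        exact dvd_mul_left _ _
      exact reg_lemma_pow he hc N1 f hdvd
    · right
      have hdvd : (C e * X + C c) ∣ C e ^ N2 * g := by
        rw [h2, h, map_zero, add_zero]
        exact dvd_mul_left _ _
      exact reg_lemma_pow he hc N2 g hdvd

end PolyLemmas
open MvPolynomial

/-- Index type for the `2n+1` variables `l, e₁,…,eₙ, s₁,…,sₙ` of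
`R = k[l, e₁, …, eₙ, s₁, …, sₙ]`. -/
abbrev CoxVar (n : ℕ) : Type := Unit ⊕ Fin n ⊕ Fin n

/-- The variable `l`. -/
def lVar (n : ℕ) : CoxVar n := Sum.inl ()

/-- The variable `eᵢ` (0-indexed). -/
def eVar {n : ℕ} (i : Fin n) : CoxVar n := Sum.inr (Sum.inl i)

/-- The variable `sᵢ` (0-indexed). -/
def sVar {n : ℕ} (i : Fin n) : CoxVar n := Sum.inr (Sum.inr i)

/-- The quadric trinomial `gᵢ = sᵢ·eᵢ + aᵢ·s_{n-1}·e_{n-1} + bᵢ·sₙ·eₙ`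
(1-based indexing as in the paper; here `i : Fin (n-2)` is 0-based). -/
noncomputable def coxRel (k : Type*) [Field k] (n : ℕ) (hn : 3 ≤ n) (a b : Fin (n - 2) → k)
    (i : Fin (n - 2)) : MvPolynomial (CoxVar n) k :=
  X (sVar (Fin.castLE (by omega) i)) * X (eVar (Fin.castLE (by omega) i))
    + C (a i) * X (sVar ⟨n - 2, by omega⟩) * X (eVar ⟨n - 2, by omega⟩)
    + C (b i) * X (sVar ⟨n - 1, by omega⟩) * X (eVar ⟨n - 1, by omega⟩)



section KillVars
open scoped Classical

variable {k : Type*} [CommRing k] {σ : Type*}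

/-- The evaluation sending the variables in `V` to `0` and fixing the others. -/
noncomputable def killVars (k : Type*) [CommRing k] {σ : Type*} (V : Set σ) :
    MvPolynomial σ k →ₐ[k] MvPolynomial σ k :=
  aeval (fun v => if v ∈ V then 0 else X v)

lemma killVars_X_mem {V : Set σ} {v : σ} (hv : v ∈ V) : killVars k V (X v) = 0 := by
  simp [killVars, hv]

lemma killVars_X_not_mem {V : Set σ} {v : σ} (hv : v ∉ V) : killVars k V (X v) = X v := by
  simp [killVars, hv]

lemma sub_killVars_mem_span (V : Set σ) (f : MvPolynomial σ k) :
    f - killVars k V f ∈ Ideal.span (X '' V) := by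
  induction f using MvPolynomial.induction_on with
  | C a => simp [killVars]
  | add p q hp hq =>
    have : p + q - killVars k V (p + q) = (p - killVars k V p) + (q - killVars k V q) := by
      rw [map_add]; ring
    rw [this]
    exact Ideal.add_mem _ hp hq
  | mul_X p v hp =>
    by_cases hv : v ∈ V
    · have hx : X v ∈ Ideal.span (X '' V : Set (MvPolynomial σ k)) :=
        Ideal.subset_span ⟨v, hv, rfl⟩
      rw [map_mul, killVars_X_mem hv, mul_zero, sub_zero]
      exact Ideal.mul_mem_left _ _ hx
    · rw [map_mul, killVars_X_not_mem hv]
      have : p * X v - killVars k V p * X v = (p - killVars k V p) * X v := by ring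
      rw [this]
      exact Ideal.mul_mem_right _ _ hp
  
lemma span_X_eq_ker (V : Set σ) :
    Ideal.span (X '' V : Set (MvPolynomial σ k)) = RingHom.ker (killVars k V) := by
  apply le_antisymm
  · rw [Ideal.span_le]
    rintro _ ⟨v, hv, rfl⟩
    simp [RingHom.mem_ker, killVars_X_mem hv]
  · intro f hf
    have h0 : killVars k V f = 0 := hf
    have := sub_killVars_mem_span (k := k) V f
    rwa [h0, sub_zero] at this

lemma span_X_isPrime [IsDomain k] (V : Set σ) :
    (Ideal.span (X '' V : Set (MvPolynomial σ k))).IsPrime := by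
  rw [span_X_eq_ker]
  exact RingHom.ker_isPrime _

lemma not_mem_span_X {V : Set σ} {f : MvPolynomial σ k} (hf : killVars k V f ≠ 0) :
    f ∉ Ideal.span (X '' V : Set (MvPolynomial σ k)) := by
  rw [span_X_eq_ker]
  exact hf

end KillVars


universe u

section Master

/-- The generator `gₜ = eₜ·Xₜ + cₜ`. -/
noncomputable def masterGen {A : Type u} [CommRing A] {m : ℕ} (e c : Fin m → A) (t : Fin m) :
    MvPolynomial (Fin m) A :=
  MvPolynomial.C (e t) * MvPolynomial.X t + MvPolynomial.C (c t)

/-- The goodness hypothesis on the family `(e, c)`. -/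
def goodFam {A : Type u} [CommRing A] {m : ℕ} (e c : Fin m → A) : Prop :=
  ∀ S : Finset (Fin m),
    (Ideal.span (e '' ↑S)).IsPrime ∧
    (∀ t, t ∉ S → e t ∉ Ideal.span (e '' ↑S)) ∧
    (∀ t, c t ∉ Ideal.span (e '' ↑S))

variable {A : Type u} [CommRing A] [IsDomain A] {m : ℕ}

lemma goodFam.e_ne_zero {e c : Fin m → A} (h : goodFam e c) (t : Fin m) : e t ≠ 0 := by
  have := (h ∅).2.1 t (Finset.notMem_empty t)
  simp only [Finset.coe_empty, Set.image_empty, Ideal.span_empty] at this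
  intro h0
  exact this (h0 ▸ Ideal.zero_mem ⊥)

lemma goodFam.c_ne_zero {e c : Fin m → A} (h : goodFam e c) (t : Fin m) : c t ≠ 0 := by
  have := (h ∅).2.2 t
  simp only [Finset.coe_empty, Set.image_empty, Ideal.span_empty] at this
  intro h0
  exact this (h0 ▸ Ideal.zero_mem ⊥)

/-- A constant `C x`, `x ≠ 0`, is not in the span of the generators (fraction field argument). -/
lemma C_not_mem_span_masterGen {e c : Fin m → A} (he : ∀ t, e t ≠ 0) {x : A} (hx : x ≠ 0) :
    MvPolynomial.C x ∉ Ideal.span (Set.range (masterGen e c)) := by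
  set K := FractionRing A
  set v : Fin m → K := fun t => - (algebraMap A K (c t) / algebraMap A K (e t)) with hv
  set φ : MvPolynomial (Fin m) A →ₐ[A] K := MvPolynomial.aeval v with hφ
  have hker : Ideal.span (Set.range (masterGen e c)) ≤ RingHom.ker (φ : _ →+* K) := by
    rw [Ideal.span_le]
    rintro _ ⟨t, rfl⟩
    have het : algebraMap A K (e t) ≠ 0 := fun h0 =>
      he t ((IsFractionRing.to_map_eq_zero_iff (K := K)).mp h0)
    simp only [SetLike.mem_coe, RingHom.mem_ker, RingHom.coe_coe, masterGen, map_add, map_mul,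
      MvPolynomial.aeval_C, MvPolynomial.aeval_X, hφ, hv]
    rw [mul_neg, mul_div_cancel₀ _ het]
    ring
  intro hmem
  have h0 : φ (MvPolynomial.C x) = 0 := hker hmem
  rw [hφ, MvPolynomial.aeval_C] at h0
  exact hx ((IsFractionRing.to_map_eq_zero_iff (K := K)).mp h0)

lemma goodFam.shift {e c : Fin (m + 1) → A} (h : goodFam e c) :
    goodFam (fun t : Fin m => e t.succ) (fun t => c t.succ) := by
  intro S
  have him : (fun t : Fin m => e t.succ) '' ↑S = e '' ↑(S.map (Fin.succEmb m)) := by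
    rw [Finset.coe_map, ← Set.image_comp]
    rfl
  obtain ⟨h1, h2, h3⟩ := h (S.map (Fin.succEmb m))
  refine ⟨by rwa [him], fun t ht => ?_, fun t => by rw [him]; exact h3 t.succ⟩
  rw [him]
  refine h2 t.succ (fun hmem => ht ?_)
  rcases Finset.mem_map.mp hmem with ⟨u, hu, hequ⟩
  have : u = t := Fin.succ_injective m hequ
  rwa [← this]

lemma goodFam.quot {e c : Fin (m + 1) → A} (h : goodFam e c) :
    goodFam (fun t : Fin m => Ideal.Quotient.mk (Ideal.span {e 0}) (e t.succ))
      (fun t : Fin m => Ideal.Quotient.mk (Ideal.span {e 0}) (c t.succ)) := by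
  classical
  set I₀ : Ideal A := Ideal.span {e 0} with hI₀
  set π := Ideal.Quotient.mk I₀ with hπ
  intro S
  set T : Finset (Fin (m + 1)) := insert 0 (S.map (Fin.succEmb m)) with hT
  obtain ⟨h1, h2, h3⟩ := h T
  -- the span downstairs is the image of the span upstairs
  have himg : (fun t : Fin m => π (e t.succ)) '' ↑S =
      π '' ((fun t : Fin m => e t.succ) '' ↑S) := by
    rw [← Set.image_comp]; rfl
  have hspan : Ideal.span ((fun t : Fin m => π (e t.succ)) '' ↑S) =
      Ideal.map π (Ideal.span ((fun t : Fin m => e t.succ) '' ↑S)) := by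
    rw [Ideal.map_span, himg]
  have hsup : Ideal.span ((fun t : Fin m => e t.succ) '' ↑S) ⊔ I₀ =
      Ideal.span (e '' ↑T) := by
    rw [hT, Finset.coe_insert, Set.image_insert_eq, Ideal.span_insert]
    rw [sup_comm]
    congr 1
    rw [Finset.coe_map, ← Set.image_comp]
    rfl
  have hmemiff : ∀ x : A, π x ∈ Ideal.span ((fun t : Fin m => π (e t.succ)) '' ↑S) ↔
      x ∈ Ideal.span (e '' ↑T) := by
    intro x
    rw [hspan, hπ, Ideal.mem_quotient_iff_mem_sup, hsup]
  refine ⟨?_, fun t ht hmem => ?_, fun t hmem => ?_⟩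
  · -- primality
    rw [hspan]
    rw [← Ideal.Quotient.isDomain_iff_prime]
    have hdom : IsDomain (A ⧸ Ideal.span (e '' ↑T)) :=
      (Ideal.Quotient.isDomain_iff_prime _).mpr h1
    have hker : RingHom.ker π ≤ Ideal.span ((fun t : Fin m => e t.succ) '' ↑S) ⊔ I₀ := by
      rw [hπ, Ideal.mk_ker]; exact le_sup_right
    refine Function.Injective.isDomain
      ((DoubleQuot.quotQuotEquivQuotSup I₀ (Ideal.span ((fun t : Fin m => e t.succ) '' ↑S))).trans
        (Ideal.quotEquivOfEq (by rw [sup_comm, hsup]))).toRingHom ?_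
    exact RingEquiv.injective _
  · refine h2 t.succ ?_ ((hmemiff _).mp hmem)
    intro hTmem
    rw [hT, Finset.mem_insert] at hTmem
    rcases hTmem with h0 | hmap
    · exact (Fin.succ_ne_zero t) h0
    · rcases Finset.mem_map.mp hmap with ⟨u, hu, hequ⟩
      exact ht (by rwa [← Fin.succ_injective m hequ])
  · exact h3 t.succ ((hmemiff _).mp hmem)

end Master

universe uu

lemma range_fin_succ {m : ℕ} {β : Type*} (f : Fin (m + 1) → β) :
    Set.range f = insert (f 0) (Set.range (fun t : Fin m => f t.succ)) := by
  ext x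
  constructor
  · rintro ⟨t, rfl⟩
    induction t using Fin.cases with
    | zero => exact Set.mem_insert _ _
    | succ u => exact Set.mem_insert_of_mem _ ⟨u, rfl⟩
  · rintro (rfl | ⟨u, rfl⟩)
    · exact ⟨0, rfl⟩
    · exact ⟨u.succ, rfl⟩

theorem master : ∀ (m : ℕ) (A : Type u) [CommRing A] [IsDomain A] (e c : Fin m → A),
    goodFam e c → (Ideal.span (Set.range (masterGen e c))).IsPrime := by
  intro m
  induction m with
  | zero =>
    intro A _ _ e c _
    rw [Set.range_eq_empty (masterGen e c), Ideal.span_empty]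
    exact Ideal.bot_prime
  | succ m ih =>
    intro A _ _ e c h
    classical
    set g' : Fin m → MvPolynomial (Fin m) A :=
      masterGen (fun t => e t.succ) (fun t => c t.succ) with hg'
    set J' : Ideal (MvPolynomial (Fin m) A) := Ideal.span (Set.range g') with hJ'def
    have hJ' : J'.IsPrime := ih A _ _ h.shift
    haveI := hJ'
    set q : MvPolynomial (Fin m) A →+* MvPolynomial (Fin m) A ⧸ J' :=
      Ideal.Quotient.mk J' with hq
    haveI hBdom : IsDomain (MvPolynomial (Fin m) A ⧸ J') :=
      (Ideal.Quotient.isDomain_iff_prime J').mpr hJ'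
    -- the constant C (e 0) is not in J'
    have hCe0 : MvPolynomial.C (e 0) ∉ J' :=
      C_not_mem_span_masterGen (fun t => h.e_ne_zero t.succ) (h.e_ne_zero 0)
    -- the base prime ideal I₀
    set I₀ : Ideal A := Ideal.span {e 0} with hI₀def
    have hI₀ : I₀.IsPrime := by
      have h1 := (h {0}).1
      rwa [Finset.coe_singleton, Set.image_singleton] at h1
    haveI := hI₀
    haveI : IsDomain (A ⧸ I₀) := (Ideal.Quotient.isDomain_iff_prime I₀).mpr hI₀
    set e'' : Fin m → A ⧸ I₀ := fun t => Ideal.Quotient.mk I₀ (e t.succ) with he''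
    set c'' : Fin m → A ⧸ I₀ := fun t => Ideal.Quotient.mk I₀ (c t.succ) with hc''
    set J'' : Ideal (MvPolynomial (Fin m) (A ⧸ I₀)) :=
      Ideal.span (Set.range (masterGen e'' c'')) with hJ''def
    have hJ'' : J''.IsPrime := ih (A ⧸ I₀) e'' c'' h.quot
    haveI := hJ''
    set ψ : MvPolynomial (Fin m) A →+* MvPolynomial (Fin m) (A ⧸ I₀) :=
      (MvPolynomial.map (Ideal.Quotient.mk I₀) : _ →+* _) with hψdef
    have hψs : Function.Surjective ψ :=
      MvPolynomial.map_surjective _ Ideal.Quotient.mk_surjective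
    have hψg' : ∀ t, ψ (g' t) = masterGen e'' c'' t := by
      intro t
      simp [hψdef, hg', masterGen, he'', hc'']
    have hψCe0 : ψ (MvPolynomial.C (e 0)) = 0 := by
      simp [hψdef, Ideal.Quotient.eq_zero_iff_mem, hI₀def, Ideal.mem_span_singleton_self]
    set Q : Ideal (MvPolynomial (Fin m) A) := J' ⊔ Ideal.span {MvPolynomial.C (e 0)} with hQdef
    have hQgen : Q = Ideal.span (Set.range g' ∪ {MvPolynomial.C (e 0)}) := by
      rw [hQdef, Ideal.span_union, hJ'def]
    have hmapψQ : Ideal.map ψ Q = J'' := by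
      rw [hQgen, Ideal.map_span, Set.image_union, Set.image_singleton, hψCe0,
        ← Set.range_comp]
      have : (ψ ∘ g') = masterGen e'' c'' := funext hψg'
      rw [this, Ideal.span_union, Ideal.span_singleton_eq_bot.mpr rfl, sup_bot_eq, hJ''def]
    have hkerψ : RingHom.ker ψ ≤ Q := by
      rw [hψdef, MvPolynomial.ker_map, Ideal.mk_ker, hI₀def, Ideal.map_span,
        Set.image_singleton]
      exact le_sup_right
    have hQ : Q.IsPrime := by
      have hEq : Q = Ideal.comap ψ J'' := by
        rw [← hmapψQ, Ideal.comap_map_of_surjective ψ hψs, ← RingHom.ker_eq_comap_bot,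
          sup_eq_left.mpr hkerψ]
      rw [hEq]
      exact Ideal.comap_isPrime ψ J''
    haveI := hQ
    -- the image of C (e 0) in the quotient B
    have hebar0 : q (MvPolynomial.C (e 0)) ≠ 0 := by
      rw [hq, Ne, Ideal.Quotient.eq_zero_iff_mem]
      exact hCe0
    have hspanebar : Ideal.span {q (MvPolynomial.C (e 0))} = Ideal.map q Q := by
      rw [hQdef, Ideal.map_sup, hq, Ideal.map_quotient_self, bot_sup_eq, Ideal.map_span,
        Set.image_singleton]
    have hprime_ebar : Prime (q (MvPolynomial.C (e 0))) := by
      rw [← Ideal.span_singleton_prime hebar0, hspanebar]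
      exact Ideal.map_isPrime_of_surjective Ideal.Quotient.mk_surjective
        (by rw [Ideal.mk_ker]; exact le_sup_left)
    have hnotdvd : ¬ q (MvPolynomial.C (e 0)) ∣ q (MvPolynomial.C (c 0)) := by
      intro hdvd
      have hmem : q (MvPolynomial.C (c 0)) ∈ Ideal.span {q (MvPolynomial.C (e 0))} :=
        Ideal.mem_span_singleton.mpr hdvd
      rw [hspanebar, hq] at hmem
      have hmem2 : MvPolynomial.C (c 0) ∈ Q := by
        have h2 := Ideal.mem_quotient_iff_mem_sup.mp hmem
        rwa [sup_eq_left.mpr le_sup_left] at h2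
      have hmem3 : ψ (MvPolynomial.C (c 0)) ∈ J'' := hmapψQ ▸ Ideal.mem_map_of_mem ψ hmem2
      rw [hψdef, MvPolynomial.map_C] at hmem3
      refine C_not_mem_span_masterGen (e := e'') (c := c'') ?_ ?_ hmem3
      · intro t h0
        rw [he'', Ideal.Quotient.eq_zero_iff_mem] at h0
        have h2 := (h {0}).2.1 t.succ (by simp [Fin.succ_ne_zero])
        rw [Finset.coe_singleton, Set.image_singleton] at h2
        exact h2 h0
      · intro h0
        rw [Ideal.Quotient.eq_zero_iff_mem] at h0
        have h3 := (h {0}).2.2 0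
        rw [Finset.coe_singleton, Set.image_singleton] at h3
        exact h3 h0
    -- now move to the polynomial picture
    set Θ := MvPolynomial.finSuccEquiv A m with hΘdef
    have hΘC : ∀ a : A, Θ (MvPolynomial.C a) = Polynomial.C (MvPolynomial.C a) := by
      intro a
      simp [hΘdef, finSuccEquiv_apply]
    set G : Polynomial (MvPolynomial (Fin m) A) :=
      Polynomial.C (MvPolynomial.C (e 0)) * Polynomial.X
        + Polynomial.C (MvPolynomial.C (c 0)) with hGdef
    have hΘg0 : Θ (masterGen e c 0) = G := by
      show Θ (MvPolynomial.C (e 0) * MvPolynomial.X 0 + MvPolynomial.C (c 0)) = G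
      rw [map_add, map_mul, hΘC, hΘC, hΘdef, finSuccEquiv_X_zero]
    have hΘgs : ∀ t : Fin m, Θ (masterGen e c t.succ) = Polynomial.C (g' t) := by
      intro t
      show Θ (MvPolynomial.C (e t.succ) * MvPolynomial.X t.succ + MvPolynomial.C (c t.succ))
        = Polynomial.C (g' t)
      rw [map_add, map_mul, hΘC, hΘC, hΘdef, finSuccEquiv_X_succ,
        ← Polynomial.C_mul, ← Polynomial.C_add]
      rfl
    set Θr : MvPolynomial (Fin (m + 1)) A ≃+* Polynomial (MvPolynomial (Fin m) A) :=
      Θ.toRingEquiv with hΘr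
    set P : Ideal (Polynomial (MvPolynomial (Fin m) A)) :=
      Ideal.span {G} ⊔ Ideal.map (Polynomial.C : _ →+* _) J' with hPdef
    have hmapΘJ : Ideal.map Θr (Ideal.span (Set.range (masterGen e c))) = P := by
      rw [Ideal.map_span, ← Set.range_comp]
      have hr : (⇑Θr ∘ masterGen e c) = fun t => Θ (masterGen e c t) := rfl
      rw [hr, range_fin_succ, hΘg0]
      have hr2 : (fun t : Fin m => Θ (masterGen e c t.succ)) = fun t => Polynomial.C (g' t) :=
        funext hΘgs
      rw [hr2, Ideal.span_insert, hPdef, hJ'def, Ideal.map_span, ← Set.range_comp]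
      rfl
    set Ψ : Polynomial (MvPolynomial (Fin m) A) →+* Polynomial (MvPolynomial (Fin m) A ⧸ J') :=
      Polynomial.mapRingHom q with hΨdef
    have hΨs : Function.Surjective Ψ := by
      rw [hΨdef]
      intro p
      obtain ⟨p', hp'⟩ := Polynomial.map_surjective q Ideal.Quotient.mk_surjective p
      exact ⟨p', by simpa [Polynomial.coe_mapRingHom] using hp'⟩
    have hkerΨ : RingHom.ker Ψ = Ideal.map (Polynomial.C : _ →+* _) J' := by
      rw [hΨdef, Polynomial.ker_mapRingHom, hq, Ideal.mk_ker]
    have hΨG : Ψ G = Polynomial.C (q (MvPolynomial.C (e 0))) * Polynomial.X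
        + Polynomial.C (q (MvPolynomial.C (c 0))) := by
      simp [hΨdef, hGdef]
    have hGP : Prime (Ψ G) := by
      rw [hΨG]
      exact prime_linear hprime_ebar hnotdvd
    have hmapΨP : Ideal.map Ψ P = Ideal.span {Ψ G} := by
      have hcomp : Ψ.comp (Polynomial.C : MvPolynomial (Fin m) A →+* _)
          = (Polynomial.C : _ →+* _).comp q := by
        apply MvPolynomial.ringHom_ext <;> intro x <;>
          simp [hΨdef, Polynomial.map_C]
      rw [hPdef, Ideal.map_sup, Ideal.map_span, Set.image_singleton, Ideal.map_map, hcomp,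
        ← Ideal.map_map, hq, Ideal.map_quotient_self, Ideal.map_bot, sup_bot_eq]
    have hP : P.IsPrime := by
      have hEq : P = Ideal.comap Ψ (Ideal.span {Ψ G}) := by
        rw [← hmapΨP, Ideal.comap_map_of_surjective Ψ hΨs, ← RingHom.ker_eq_comap_bot,
          sup_eq_left.mpr (by rw [hkerΨ]; exact le_sup_right)]
      haveI : (Ideal.span {Ψ G}).IsPrime := (Ideal.span_singleton_prime hGP.ne_zero).mpr hGP
      rw [hEq]
      exact Ideal.comap_isPrime Ψ _
    haveI := hP
    have hcomap : Ideal.span (Set.range (masterGen e c)) = Ideal.comap Θr P := by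
      rw [← hmapΘJ, Ideal.comap_map_of_bijective Θr (RingEquiv.bijective Θr)]
    rw [hcomap]
    exact Ideal.comap_isPrime Θr P

/-- The base variables: `l`, all the `e`'s, and the two last `s`'s. -/
abbrev CoxBase (n : ℕ) : Type := Unit ⊕ Fin n ⊕ Fin 2

/-- Splitting off the first `n-2` of the `s`-variables. -/
def coxEquiv (n : ℕ) (hn : 3 ≤ n) : CoxVar n ≃ (Fin (n - 2) ⊕ CoxBase n) where
  toFun v :=
    match v with
    | Sum.inl _ => Sum.inr (Sum.inl ())
    | Sum.inr (Sum.inl j) => Sum.inr (Sum.inr (Sum.inl j))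
    | Sum.inr (Sum.inr s) =>
        if h : (s : ℕ) < n - 2 then Sum.inl ⟨s, h⟩
        else Sum.inr (Sum.inr (Sum.inr ⟨(s : ℕ) - (n - 2), by have := s.isLt; omega⟩))
  invFun w :=
    match w with
    | Sum.inl t => Sum.inr (Sum.inr ⟨(t : ℕ), by have := t.isLt; omega⟩)
    | Sum.inr (Sum.inl _) => Sum.inl ()
    | Sum.inr (Sum.inr (Sum.inl j)) => Sum.inr (Sum.inl j)
    | Sum.inr (Sum.inr (Sum.inr d)) =>
        Sum.inr (Sum.inr ⟨n - 2 + (d : ℕ), by have := d.isLt; omega⟩)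
  left_inv v := by
    rcases v with u | j | s
    · rfl
    · rfl
    · dsimp only
      split_ifs with hlt
      · rfl
      · have := s.isLt
        simp only []
        congr 1
        congr 1
        exact Fin.ext (by simp; omega)
  right_inv w := by
    rcases w with t | u | j | d
    · have := t.isLt
      simp only []
      rw [dif_pos (by simpa using this)]
    · rfl
    · rfl
    · have := d.isLt
      simp only []
      rw [dif_neg (by simp)]
      simp only [Sum.inr.injEq]
      exact Fin.ext (by simp)


section App

variable (k : Type u) [Field k] (n : ℕ) (hn : 3 ≤ n) (a b : Fin (n - 2) → k)

/-- The distinguished `e`-variables, as elements of the base polynomial ring. -/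
noncomputable def eF (t : Fin (n - 2)) : MvPolynomial (CoxBase n) k :=
  X (Sum.inr (Sum.inl (Fin.castLE (by omega) t)))

/-- The constants `cₜ = aₜ·s_{n-1}e_{n-1} + bₜ·sₙeₙ`. -/
noncomputable def cF (t : Fin (n - 2)) : MvPolynomial (CoxBase n) k :=
  C (a t) * X (Sum.inr (Sum.inr (0 : Fin 2))) * X (Sum.inr (Sum.inl ⟨n - 2, by omega⟩))
    + C (b t) * X (Sum.inr (Sum.inr (1 : Fin 2))) * X (Sum.inr (Sum.inl ⟨n - 1, by omega⟩))

lemma cF_ne_zero (ha : ∀ i, a i ≠ 0) (t : Fin (n - 2)) : cF k n hn a b t ≠ 0 := by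
  classical
  intro h0
  have := congrArg (MvPolynomial.eval (fun v : CoxBase n =>
    if v = Sum.inr (Sum.inr (0 : Fin 2)) ∨ v = Sum.inr (Sum.inl ⟨n - 2, by omega⟩)
      then (1 : k) else 0)) h0
  rw [cF] at this
  have hne1 : ¬ (n - 1 = n - 2) := by omega
  simp [Fin.ext_iff, hne1] at this
  exact ha t this

lemma goodFam_eF_cF (ha : ∀ i, a i ≠ 0) : goodFam (eF k n hn) (cF k n hn a b) := by
  classical
  intro S
  set w : Fin (n - 2) → CoxBase n := fun t => Sum.inr (Sum.inl (Fin.castLE (by omega) t))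
    with hw
  have hwinj : Function.Injective w := by
    intro s t h
    simp only [hw, Sum.inr.injEq, Sum.inl.injEq] at h
    exact Fin.castLE_injective _ h
  set V : Set (CoxBase n) := w '' ↑S with hV
  have himg : eF k n hn '' ↑S = X '' V := by
    rw [hV, ← Set.image_comp]
    rfl
  have hkill_cF : ∀ t, killVars k V (cF k n hn a b t) = cF k n hn a b t := by
    intro t
    have h1 : (Sum.inr (Sum.inr (0 : Fin 2)) : CoxBase n) ∉ V := by
      rintro ⟨u, -, hu⟩; simp [hw] at hu
    have h2 : (Sum.inr (Sum.inr (1 : Fin 2)) : CoxBase n) ∉ V := by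
      rintro ⟨u, -, hu⟩; simp [hw] at hu
    have h3 : (Sum.inr (Sum.inl (⟨n - 2, by omega⟩ : Fin n)) : CoxBase n) ∉ V := by
      rintro ⟨u, -, hu⟩
      simp only [hw, Sum.inr.injEq, Sum.inl.injEq] at hu
      have := congrArg Fin.val hu
      simp at this
      omega
    have h4 : (Sum.inr (Sum.inl (⟨n - 1, by omega⟩ : Fin n)) : CoxBase n) ∉ V := by
      rintro ⟨u, -, hu⟩
      simp only [hw, Sum.inr.injEq, Sum.inl.injEq] at hu
      have := congrArg Fin.val hu
      have hu2 := u.isLt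
      simp at this
      omega
    rw [cF, map_add, map_mul, map_mul, map_mul, map_mul]
    rw [killVars_X_not_mem h1, killVars_X_not_mem h2, killVars_X_not_mem h3,
      killVars_X_not_mem h4]
    have hCa : ∀ x : k, killVars k V (C x) = (C x : MvPolynomial (CoxBase n) k) := by
      intro x
      rw [← MvPolynomial.algebraMap_eq]
      exact AlgHom.commutes _ x
    rw [hCa, hCa]
  refine ⟨?_, ?_, ?_⟩
  · rw [himg]; exact span_X_isPrime V
  · intro t ht
    rw [himg]
    refine not_mem_span_X (k := k) ?_
    have hnot : w t ∉ V := by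
      rintro ⟨u, hu, huw⟩
      exact ht (by rwa [← hwinj huw])
    rw [show eF k n hn t = X (w t) from rfl, killVars_X_not_mem hnot]
    exact MvPolynomial.X_ne_zero _
  · intro t
    rw [himg]
    refine not_mem_span_X (k := k) ?_
    rw [hkill_cF t]
    exact cF_ne_zero k n hn a b ha t

end App

section Final

variable (k : Type u) [Field k] (n : ℕ) (hn : 3 ≤ n) (a b : Fin (n - 2) → k)

lemma coxEquiv_sVar_lt (j : Fin n) (h : (j : ℕ) < n - 2) :
    coxEquiv n hn (sVar j) = Sum.inl ⟨(j : ℕ), h⟩ := by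
  simp only [coxEquiv, sVar, Equiv.coe_fn_mk]
  rw [dif_pos h]

lemma coxEquiv_sVar_ge (j : Fin n) (h : ¬ (j : ℕ) < n - 2) :
    coxEquiv n hn (sVar j)
      = Sum.inr (Sum.inr (Sum.inr ⟨(j : ℕ) - (n - 2), by have := j.isLt; omega⟩)) := by
  simp only [coxEquiv, sVar, Equiv.coe_fn_mk]
  rw [dif_neg h]

lemma coxEquiv_eVar (j : Fin n) :
    coxEquiv n hn (eVar j) = Sum.inr (Sum.inr (Sum.inl j)) := rfl

set_option maxHeartbeats 1000000 in
theorem stmt1' (ha : ∀ i, a i ≠ 0) (hb : ∀ i, b i ≠ 0) :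
    (Ideal.span (Set.range (coxRel k n hn a b))).IsPrime := by
  classical
  set A := MvPolynomial (CoxBase n) k with hA
  set Φ : MvPolynomial (CoxVar n) k ≃+* MvPolynomial (Fin (n - 2)) A :=
    ((MvPolynomial.renameEquiv k (coxEquiv n hn)).trans
      (MvPolynomial.sumAlgEquiv k (Fin (n - 2)) (CoxBase n))).toRingEquiv with hΦ
  have hXs : ∀ v : CoxVar n, Φ (X v)
      = sumToIter k (Fin (n - 2)) (CoxBase n) (X (coxEquiv n hn v)) := by
    intro v
    simp [hΦ, MvPolynomial.renameEquiv_apply, MvPolynomial.rename_X]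
    generalize coxEquiv n hn v = w
    rcases w with w | w
    · rw [sumAlgEquiv_X_inl, sumToIter_Xl]
    · rw [sumAlgEquiv_X_inr, sumToIter_Xr]
  have hCs : ∀ x : k, Φ (C x) = C (C x) := by
    intro x
    simp [hΦ, MvPolynomial.renameEquiv_apply, sumAlgEquiv_C_inl]
  have hgen : ∀ i, Φ (coxRel k n hn a b i)
      = masterGen (eF k n hn) (cF k n hn a b) i := by
    intro i
    rw [coxRel, map_add, map_add, map_mul, map_mul, map_mul, map_mul, map_mul]
    rw [hXs, hXs, hXs, hXs, hXs, hXs, hCs, hCs]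
    rw [coxEquiv_sVar_lt n hn _ (by simpa using i.isLt), coxEquiv_eVar,
      coxEquiv_sVar_ge n hn _ (by simp), coxEquiv_eVar,
      coxEquiv_sVar_ge n hn _ (by simp; omega), coxEquiv_eVar]
    have hfin0 : (⟨(⟨n - 2, by omega⟩ : Fin n) - (n - 2), by omega⟩ : Fin 2) = 0 := by
      exact Fin.ext (by simp)
    have hfin1 : (⟨(⟨n - 1, by omega⟩ : Fin n) - (n - 2), by omega⟩ : Fin 2) = 1 := by
      exact Fin.ext (by simp; omega)
    rw [sumToIter_Xl, sumToIter_Xr, sumToIter_Xr, sumToIter_Xr, sumToIter_Xr, sumToIter_Xr]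
    rw [hfin0, hfin1]
    rw [masterGen, cF, map_add, map_mul, map_mul, map_mul, map_mul]
    have hcast : (Fin.castLE (by omega : n - 2 ≤ n) i : Fin n) = ⟨(i : ℕ), by
      have := i.isLt; omega⟩ := rfl
    rw [show eF k n hn i = X (Sum.inr (Sum.inl (Fin.castLE (by omega) i))) from rfl]
    simp only [Fin.coe_castLE, Fin.eta]
    ring
  have hmap : Ideal.map Φ (Ideal.span (Set.range (coxRel k n hn a b)))
      = Ideal.span (Set.range (masterGen (eF k n hn) (cF k n hn a b))) := by
    rw [Ideal.map_span, ← Set.range_comp]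
    congr 1
    exact congrArg _ (funext hgen)
  have hprime := master (n - 2) A (eF k n hn) (cF k n hn a b) (goodFam_eF_cF k n hn a b ha)
  haveI : (Ideal.span (Set.range (masterGen (eF k n hn) (cF k n hn a b)))).IsPrime := hprime
  have heq : Ideal.span (Set.range (coxRel k n hn a b)) = Ideal.comap Φ
      (Ideal.span (Set.range (masterGen (eF k n hn) (cF k n hn a b)))) := by
    rw [← hmap, Ideal.comap_map_of_bijective Φ (RingEquiv.bijective Φ)]
  rw [heq]
  exact Ideal.comap_isPrime Φ _

end Final

/-- For `n ≥ 3` and nonzero scalars `aᵢ, bᵢ`, the ideal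
`J = (g₁, …, g_{n-2})` of `R = k[l, e₁, …, eₙ, s₁, …, sₙ]` is prime. -/
theorem stmt1 (k : Type*) [Field k] (n : ℕ) (hn : 3 ≤ n)
    (a b : Fin (n - 2) → k) (ha : ∀ i, a i ≠ 0) (hb : ∀ i, b i ≠ 0) :
    (Ideal.span (Set.range (coxRel k n hn a b))).IsPrime :=
  stmt1' k n hn a b ha hb
end

section
/- Let k be a field, n ≥ 3, and let a_1,...,a_{n-2}, b_1,...,b_{n-2} be nonzero elements of k. In the polynomial ring R = k[l, e_1,...,e_n, s_1,...,s_n], the sequence g_1, g_2, ..., g_{n-2}, where g_i = s_i·e_i + a_i·s_{n-1}·e_{n-1} + b_i·s_n·e_n, is a regular sequence on R (each g_i is a non-zero divisor modulo the ideal generated by the preceding ones, and the quotient R/(g_1,...,g_{n-2}) is nonzero); in particular R/J is a complete intersection ring. -/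
open MvPolynomial

/- ### Auxiliary lemmas -/

/-- Transport of nonzerodivisors along a ring equivalence. -/
lemma nzd_map {R S : Type*} [CommRing R] [CommRing S] (e : R ≃+* S) {x : R}
    (h : x ∈ nonZeroDivisors R) : e x ∈ nonZeroDivisors S := by
  rw [mem_nonZeroDivisors_iff_right] at h ⊢
  intro y hy
  have h0 : e.symm y * x = 0 := by
    apply e.injective
    rw [map_mul, map_zero, e.apply_symm_apply]
    exact hy
  have h1 : e.symm y = 0 := h _ h0
  have : e.symm y = e.symm 0 := by rw [h1, map_zero]
  exact e.symm.injective this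

/-- If `C a` is a nonzerodivisor in `R[X]`, then `a` is a nonzerodivisor in `R`. -/
lemma nzd_of_C_nzd {R : Type*} [CommRing R] {a : R}
    (h : Polynomial.C a ∈ nonZeroDivisors (Polynomial R)) : a ∈ nonZeroDivisors R := by
  rw [mem_nonZeroDivisors_iff_right] at h ⊢
  intro x hx
  have : Polynomial.C x * Polynomial.C a = 0 := by
    rw [← Polynomial.C_mul, hx, Polynomial.C_0]
  have := h _ this
  exact Polynomial.C_eq_zero.mp this

/-- The equivalence between `Option {x // x ∈ {v}ᶜ}` and `σ`. -/
def optCompl {σ : Type*} [DecidableEq σ] (v : σ) : Option (({v}ᶜ : Set σ)) ≃ σ where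
  toFun o := o.elim v Subtype.val
  invFun x := if h : x = v then none else some ⟨x, by simp [h]⟩
  left_inv o := by
    cases o with
    | none => simp
    | some w =>
      have hw : (w : σ) ≠ v := w.2
      simp [hw]
  right_inv x := by
    by_cases h : x = v <;> simp [h]

set_option maxHeartbeats 1000000 in
/-- Key step: if all elements of `G` avoid the variable `v`, and
`g = X v * p + c` with `p, c` avoiding `v`, and the class of `p` mod `span G` is a
nonzerodivisor, then the class of `g` mod `span G` is a nonzerodivisor. -/
lemma step {k : Type*} [Field k] {σ : Type*} [DecidableEq σ] (v : σ)
    (G : Set (MvPolynomial σ k))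
    (hG : ∀ f ∈ G, f ∈ supported k ({v}ᶜ : Set σ))
    (g p c : MvPolynomial σ k) (hg : g = X v * p + c)
    (hp : p ∈ supported k ({v}ᶜ : Set σ)) (hc : c ∈ supported k ({v}ᶜ : Set σ))
    (hN : Ideal.Quotient.mk (Ideal.span G) p ∈
      nonZeroDivisors (MvPolynomial σ k ⧸ Ideal.span G)) :
    Ideal.Quotient.mk (Ideal.span G) g ∈
      nonZeroDivisors (MvPolynomial σ k ⧸ Ideal.span G) := by
  classical
  set W := (({v}ᶜ : Set σ)) with hW
  -- the algebra equivalence splitting off the variable `v`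
  let Φ : MvPolynomial σ k ≃ₐ[k] Polynomial (MvPolynomial W k) :=
    (renameEquiv k (optCompl v).symm).trans (optionEquivLeft k W)
  have hsymm_val : ∀ w : W, (optCompl v).symm (w : σ) = some w := by
    intro w
    have hw : (w : σ) ≠ v := w.2
    have : (optCompl v) (some w) = (w : σ) := rfl
    rw [← this, Equiv.symm_apply_apply]
  have hCsome : ∀ q : MvPolynomial W k,
      (optionEquivLeft k W) (rename (some : W → Option W) q) = Polynomial.C q := by
    have : (optionEquivLeft k W).toAlgHom.comp (rename (some : W → Option W)) =
        Polynomial.CAlgHom := by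
      apply MvPolynomial.algHom_ext
      intro w
      simp [optionEquivLeft_X_some]
    intro q
    exact DFunLike.congr_fun this q
  have hΦ_ren : ∀ q : MvPolynomial W k,
      Φ (rename (Subtype.val : W → σ) q) = Polynomial.C q := by
    intro q
    show (optionEquivLeft k W) (rename ((optCompl v).symm) (rename Subtype.val q)) = _
    rw [rename_rename]
    have : ((optCompl v).symm ∘ (Subtype.val : W → σ)) = (some : W → Option W) := by
      funext w; exact hsymm_val w
    rw [this]
    exact hCsome q
  have hΦ_Xv : Φ (X v) = Polynomial.X := by
    show (optionEquivLeft k W) (rename ((optCompl v).symm) (X v)) = _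
    rw [rename_X]
    have h0 : (optCompl v).symm v = none := by
      apply (optCompl v).injective
      rw [Equiv.apply_symm_apply]
      rfl
    rw [h0, optionEquivLeft_X_none]
  -- decompose members of supported
  have hget : ∀ f ∈ supported k ({v}ᶜ : Set σ),
      ∃ q : MvPolynomial W k, rename (Subtype.val : W → σ) q = f := by
    intro f hf
    rw [supported_eq_range_rename, AlgHom.mem_range] at hf
    exact hf
  obtain ⟨p', hp'⟩ := hget p hp
  obtain ⟨c', hc'⟩ := hget c hc
  -- the ideal downstairs
  set G' : Set (MvPolynomial W k) := (rename (Subtype.val : W → σ)) ⁻¹' G with hG'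
  have himg : (rename (Subtype.val : W → σ)) '' G' = G := by
    apply Set.Subset.antisymm
    · exact Set.image_preimage_subset _ _
    · intro f hf
      obtain ⟨q, hq⟩ := hget f (hG f hf)
      exact ⟨q, by rw [hG', Set.mem_preimage, hq]; exact hf, hq⟩
  set I : Ideal (MvPolynomial σ k) := Ideal.span G with hI
  set I' : Ideal (MvPolynomial W k) := Ideal.span G' with hI'
  have hmap : I.map (Φ : MvPolynomial σ k →+* Polynomial (MvPolynomial W k)) =
      I'.map (Polynomial.C : MvPolynomial W k →+* Polynomial (MvPolynomial W k)) := by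
    rw [hI, hI', Ideal.map_span, Ideal.map_span]
    congr 1
    rw [← himg, ← Set.image_comp]
    apply Set.image_congr
    intro q _
    exact hΦ_ren q
  -- the composite equivalence
  let χ : (MvPolynomial σ k ⧸ I) ≃+* Polynomial (MvPolynomial W k ⧸ I') :=
    (Ideal.quotientEquiv I (I'.map (Polynomial.C : _ →+* _))
      (Φ : MvPolynomial σ k ≃+* Polynomial (MvPolynomial W k)) (by rw [← hmap]; rfl)).trans
    (Ideal.polynomialQuotientEquivQuotientPolynomial I').symm
  have hχ : ∀ f : MvPolynomial σ k,
      χ (Ideal.Quotient.mk I f) = (Φ f).map (Ideal.Quotient.mk I') := by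
    intro f
    show (Ideal.polynomialQuotientEquivQuotientPolynomial I').symm
      ((Ideal.quotientEquiv I (I'.map (Polynomial.C : _ →+* _))
        (Φ : MvPolynomial σ k ≃+* Polynomial (MvPolynomial W k)) (by rw [← hmap]; rfl)) (Ideal.Quotient.mk I f)) = _
    rw [Ideal.quotientEquiv_mk, Ideal.polynomialQuotientEquivQuotientPolynomial_symm_mk]
    rfl
  -- transport hN
  have hNp : Polynomial.C (Ideal.Quotient.mk I' p') ∈
      nonZeroDivisors (Polynomial (MvPolynomial W k ⧸ I')) := by
    have := nzd_map (S := Polynomial (MvPolynomial W k ⧸ I')) χ hN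
    rwa [hχ, ← hp', hΦ_ren, Polynomial.map_C] at this
  have hA : Ideal.Quotient.mk I' p' ∈ nonZeroDivisors (MvPolynomial W k ⧸ I') :=
    nzd_of_C_nzd hNp
  -- the image of g
  have hχg : χ (Ideal.Quotient.mk I g) =
      Polynomial.C (Ideal.Quotient.mk I' p') * Polynomial.X
        + Polynomial.C (Ideal.Quotient.mk I' c') := by
    rw [hχ, hg, map_add, map_mul, hΦ_Xv, ← hp', ← hc', hΦ_ren, hΦ_ren]
    rw [Polynomial.map_add, Polynomial.map_mul, Polynomial.map_X, Polynomial.map_C,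
      Polynomial.map_C, Polynomial.X_mul]
  -- conclude
  have hgoal : χ (Ideal.Quotient.mk I g) ∈
      nonZeroDivisors (Polynomial (MvPolynomial W k ⧸ I')) := by
    rw [hχg]
    by_cases hz : (Ideal.Quotient.mk I' p' : MvPolynomial W k ⧸ I') = 0
    · -- quotient is trivial
      have hsub : Subsingleton (MvPolynomial W k ⧸ I') := by
        constructor
        intro x y
        have hx : x = 0 := (mem_nonZeroDivisors_iff_right.mp hA) x (by rw [hz, mul_zero])
        have hy : y = 0 := (mem_nonZeroDivisors_iff_right.mp hA) y (by rw [hz, mul_zero])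
        rw [hx, hy]
      have : Subsingleton (Polynomial (MvPolynomial W k ⧸ I')) := inferInstance
      rw [mem_nonZeroDivisors_iff]; refine ⟨fun x _ => Subsingleton.elim _ _, fun x _ => ?_⟩
      exact Subsingleton.elim _ _
    · apply Polynomial.mem_nonZeroDivisors_of_leadingCoeff
      rwa [Polynomial.leadingCoeff_linear hz]
  have := nzd_map (R := Polynomial (MvPolynomial W k ⧸ I')) χ.symm hgoal
  rwa [RingEquiv.symm_apply_apply] at this

/-- `coxRel j` is supported away from any variable different from the six variables
occurring in it. -/
lemma coxRel_mem_supported {k : Type*} [Field k] {n : ℕ} (hn : 3 ≤ n) (a b : Fin (n - 2) → k)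
    (j : Fin (n - 2)) (v : CoxVar n)
    (h1 : sVar (Fin.castLE (by omega) j) ≠ v) (h2 : eVar (Fin.castLE (by omega) j) ≠ v)
    (h3 : sVar (⟨n - 2, by omega⟩ : Fin n) ≠ v) (h4 : eVar (⟨n - 2, by omega⟩ : Fin n) ≠ v)
    (h5 : sVar (⟨n - 1, by omega⟩ : Fin n) ≠ v) (h6 : eVar (⟨n - 1, by omega⟩ : Fin n) ≠ v) :
    coxRel k n hn a b j ∈ supported k ({v}ᶜ : Set (CoxVar n)) := by
  have hX : ∀ u : CoxVar n, u ≠ v → X u ∈ supported k ({v}ᶜ : Set (CoxVar n)) := by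
    intro u hu
    exact X_mem_supported.2 (Set.mem_compl_singleton_iff.2 hu)
  have hC : ∀ x : k, C x ∈ supported k ({v}ᶜ : Set (CoxVar n)) := by
    intro x
    rw [← algebraMap_eq]
    exact Subalgebra.algebraMap_mem _ x
  unfold coxRel
  exact add_mem (add_mem (mul_mem (hX _ h1) (hX _ h2))
      (mul_mem (mul_mem (hC _) (hX _ h3)) (hX _ h4)))
    (mul_mem (mul_mem (hC _) (hX _ h5)) (hX _ h6))

/-- For `n ≥ 3` and nonzero scalars `aᵢ, bᵢ`, the polynomials `g₁, …, g_{n-2}` form a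
regular sequence on `R = k[l, e₁, …, eₙ, s₁, …, sₙ]`: each `gᵢ` is a non-zero divisor
modulo the ideal generated by the preceding ones, and the quotient
`R/(g₁,…,g_{n-2})` is nonzero; in particular `R/J` is a complete intersection ring. -/
theorem stmt2 (k : Type*) [Field k] (n : ℕ) (hn : 3 ≤ n)
    (a b : Fin (n - 2) → k) (ha : ∀ i, a i ≠ 0) (hb : ∀ i, b i ≠ 0) :
    (∀ i : Fin (n - 2),
      Ideal.Quotient.mk (Ideal.span (coxRel k n hn a b '' {j : Fin (n - 2) | j < i}))
          (coxRel k n hn a b i) ∈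
        nonZeroDivisors (MvPolynomial (CoxVar n) k ⧸
          Ideal.span (coxRel k n hn a b '' {j : Fin (n - 2) | j < i}))) ∧
    Nontrivial (MvPolynomial (CoxVar n) k ⧸
      Ideal.span (Set.range (coxRel k n hn a b))) := by
  constructor
  · intro i
    set G : Set (MvPolynomial (CoxVar n) k) :=
      coxRel k n hn a b '' {j : Fin (n - 2) | j < i} with hGdef
    have hilt : (i : ℕ) < n - 2 := i.2
    -- all earlier relations avoid both `sVar i` and `eVar i`
    have hGs : ∀ f ∈ G, f ∈ supported k
        ({sVar (Fin.castLE (by omega : n - 2 ≤ n) i)}ᶜ : Set (CoxVar n)) := by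
      rintro f ⟨j, hj, rfl⟩
      have hjlt : (j : ℕ) < (i : ℕ) := hj
      apply coxRel_mem_supported hn a b j <;>
        simp [sVar, eVar, Fin.ext_iff] <;> omega
    have hGe : ∀ f ∈ G, f ∈ supported k
        ({eVar (Fin.castLE (by omega : n - 2 ≤ n) i)}ᶜ : Set (CoxVar n)) := by
      rintro f ⟨j, hj, rfl⟩
      have hjlt : (j : ℕ) < (i : ℕ) := hj
      apply coxRel_mem_supported hn a b j <;>
        simp [sVar, eVar, Fin.ext_iff] <;> omega
    -- `eVar i` is a nonzerodivisor mod `span G`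
    have hNe : Ideal.Quotient.mk (Ideal.span G)
        (X (eVar (Fin.castLE (by omega : n - 2 ≤ n) i))) ∈
          nonZeroDivisors (MvPolynomial (CoxVar n) k ⧸ Ideal.span G) := by
      apply step (eVar (Fin.castLE (by omega : n - 2 ≤ n) i)) G hGe _ 1 0
        (by rw [mul_one, add_zero])
        (one_mem _) (zero_mem _)
      rw [map_one]
      exact one_mem _
    -- now `coxRel i` is a nonzerodivisor
    apply step (sVar (Fin.castLE (by omega : n - 2 ≤ n) i)) G hGs _
      (X (eVar (Fin.castLE (by omega : n - 2 ≤ n) i)))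
      (C (a i) * X (sVar ⟨n - 2, by omega⟩) * X (eVar ⟨n - 2, by omega⟩)
        + C (b i) * X (sVar ⟨n - 1, by omega⟩) * X (eVar ⟨n - 1, by omega⟩))
      (by unfold coxRel; ring) ?_ ?_ hNe
    · apply X_mem_supported.2
      apply Set.mem_compl_singleton_iff.2
      simp [sVar, eVar]
    · have hC : ∀ x : k, C x ∈ supported k
          ({sVar (Fin.castLE (by omega : n - 2 ≤ n) i)}ᶜ : Set (CoxVar n)) := by
        intro x
        rw [← algebraMap_eq]
        exact Subalgebra.algebraMap_mem _ x
      have hX : ∀ u : CoxVar n, u ≠ sVar (Fin.castLE (by omega : n - 2 ≤ n) i) →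
          X u ∈ supported k
            ({sVar (Fin.castLE (by omega : n - 2 ≤ n) i)}ᶜ : Set (CoxVar n)) := by
        intro u hu
        exact X_mem_supported.2 (Set.mem_compl_singleton_iff.2 hu)
      refine add_mem (mul_mem (mul_mem (hC _) (hX _ ?_)) (hX _ ?_))
        (mul_mem (mul_mem (hC _) (hX _ ?_)) (hX _ ?_)) <;>
        simp [sVar, eVar, Fin.ext_iff] <;> omega
  · -- nontriviality
    have hne : Ideal.span (Set.range (coxRel k n hn a b)) ≠ ⊤ := by
      intro htop
      set φ : MvPolynomial (CoxVar n) k →ₐ[k] k := aeval (fun _ => (0 : k)) with hφ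
      have hker : Ideal.span (Set.range (coxRel k n hn a b)) ≤ RingHom.ker φ.toRingHom := by
        apply Ideal.span_le.2
        rintro f ⟨j, rfl⟩
        rw [SetLike.mem_coe, RingHom.mem_ker]
        show φ (coxRel k n hn a b j) = 0
        simp [coxRel, hφ]
      have h1 : (1 : MvPolynomial (CoxVar n) k) ∈ RingHom.ker φ.toRingHom :=
        hker (htop ▸ Submodule.mem_top)
      rw [RingHom.mem_ker] at h1
      simp at h1
    exact Ideal.Quotient.nontrivial_iff.mpr hne
end

section
/- Let k be a field, n ≥ 3, and let a_1,...,a_{n-2}, b_1,...,b_{n-2} be nonzero elements of k. In R = k[l, e_1,...,e_n, s_1,...,s_n] let J = (g_1,...,g_{n-2}), where g_i = s_i·e_i + a_i·s_{n-1}·e_{n-1} + b_i·s_n·e_n. Then the elimination ideal J ∩ k[l, e_2,...,e_n, s_2,...,s_n] (the preimage of J under the inclusion of the polynomial ring in the variables other than s_1 and e_1) equals the ideal of k[l, e_2,...,e_n, s_2,...,s_n] generated by g_2,...,g_{n-2}. -/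
open MvPolynomial

/-- The inclusion of the variables `l, e₂, …, eₙ, s₂, …, sₙ` (indexed by `CoxVar (n-1)`)
into the full set of variables `l, e₁, …, eₙ, s₁, …, sₙ`. -/
def coxEmb (n : ℕ) : CoxVar (n - 1) → CoxVar n :=
  Sum.elim (fun _ => lVar n)
    (Sum.elim (fun i => eVar ⟨(i : ℕ) + 1, by omega⟩)
      (fun i => sVar ⟨(i : ℕ) + 1, by omega⟩))

/-- The trinomial `g_{j+2}` (1-based indexing, `j : Fin (n-3)` 0-based), viewed as an element
of the smaller polynomial ring `k[l, e₂, …, eₙ, s₂, …, sₙ]`. -/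
noncomputable def coxRelSmall (k : Type*) [Field k] (n : ℕ) (hn : 3 ≤ n)
    (a b : Fin (n - 2) → k) (j : Fin (n - 3)) : MvPolynomial (CoxVar (n - 1)) k :=
  X (sVar ⟨(j : ℕ), by omega⟩) * X (eVar ⟨(j : ℕ), by omega⟩)
    + C (a ⟨(j : ℕ) + 1, by omega⟩) * X (sVar ⟨n - 3, by omega⟩) * X (eVar ⟨n - 3, by omega⟩)
    + C (b ⟨(j : ℕ) + 1, by omega⟩) * X (sVar ⟨n - 2, by omega⟩) * X (eVar ⟨n - 2, by omega⟩)

/-- Core elimination step: a constant lying in the principal ideal of `X 0 * X 1 + C h`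
must be zero (seen via the Laurent substitution `X 0 ↦ T`, `X 1 ↦ -h·T⁻¹`). -/
lemma cox_core {B : Type*} [CommRing B] (h p : B)
    (hp : (C p : MvPolynomial (Fin 2) B) ∈ Ideal.span {X 0 * X 1 + C h}) : p = 0 := by
  obtain ⟨c, hc⟩ := Ideal.mem_span_singleton'.mp hp
  set φ : MvPolynomial (Fin 2) B →ₐ[B] LaurentPolynomial B :=
    aeval ![LaurentPolynomial.T 1, -LaurentPolynomial.C h * LaurentPolynomial.T (-1)] with hφ
  have hg : φ (X 0 * X 1 + C h) = 0 := by
    simp [hφ, aeval_X, algHom_C]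
  have h2 := congrArg φ hc
  rw [map_mul, hg, mul_zero] at h2
  have hCp : φ (C p) = LaurentPolynomial.C p := by
    rw [aeval_C, ← LaurentPolynomial.C_eq_algebraMap]
  rw [hCp] at h2
  have h3 : Polynomial.toLaurent (Polynomial.C p) = 0 := by
    rw [Polynomial.toLaurent_C]; exact h2.symm
  have h4 : (Polynomial.C p : Polynomial B) = 0 :=
    Polynomial.toLaurent_injective (by simpa using h3)
  exact Polynomial.C_eq_zero.mp h4

/-- Elimination step with side ideal: a constant in `(X 0 * X 1 + C h) + I·B[X]` lies in `I`. -/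
lemma cox_elim {A : Type*} [CommRing A] (h : A) (I : Ideal A) (f : A)
    (hf : (C f : MvPolynomial (Fin 2) A) ∈
      Ideal.span {X 0 * X 1 + C h} ⊔ I.map (C : A →+* MvPolynomial (Fin 2) A)) : f ∈ I := by
  set q := Ideal.Quotient.mk I
  set Φ : MvPolynomial (Fin 2) A →+* MvPolynomial (Fin 2) (A ⧸ I) :=
    MvPolynomial.map (q : A →+* A ⧸ I)
  have key : Ideal.map Φ (Ideal.span {X 0 * X 1 + C h} ⊔ I.map (C : A →+* MvPolynomial (Fin 2) A))
      ≤ Ideal.span {X 0 * X 1 + C (q h)} := by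
    rw [Ideal.map_sup]
    apply sup_le
    · rw [Ideal.map_span]
      apply Ideal.span_le.mpr
      rintro _ ⟨x, hx, rfl⟩
      rcases hx with rfl
      have : Φ (X 0 * X 1 + C h) = X 0 * X 1 + C (q h) := by
        simp [Φ, map_add, map_mul, MvPolynomial.map_X, MvPolynomial.map_C]
      rw [this]
      exact Ideal.subset_span rfl
    · rw [Ideal.map_map]
      apply Ideal.map_le_iff_le_comap.mpr
      intro x hx
      rw [Ideal.mem_comap, RingHom.comp_apply]
      have : Φ (C x) = C (q x) := by simp [Φ, MvPolynomial.map_C]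
      rw [this, Ideal.Quotient.eq_zero_iff_mem.mpr hx, map_zero]
      exact Ideal.zero_mem _
  have hmem : Φ (C f) ∈ Ideal.span {X 0 * X 1 + C (q h)} := key (Ideal.mem_map_of_mem Φ hf)
  have hq : q f = 0 := cox_core (q h) (q f) (by simpa [Φ, MvPolynomial.map_C] using hmem)
  exact Ideal.Quotient.eq_zero_iff_mem.mp hq

/-- Splitting the variables of `CoxVar n` into `e₁, s₁` (the `Fin 2` part) and the rest. -/
def coxSplit (n : ℕ) (hn : 3 ≤ n) : CoxVar n ≃ Fin 2 ⊕ CoxVar (n - 1) where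
  toFun v := match v with
    | Sum.inl _ => Sum.inr (Sum.inl ())
    | Sum.inr (Sum.inl i) =>
        if h : (i : ℕ) = 0 then Sum.inl 0
        else Sum.inr (Sum.inr (Sum.inl ⟨(i : ℕ) - 1, by omega⟩))
    | Sum.inr (Sum.inr i) =>
        if h : (i : ℕ) = 0 then Sum.inl 1
        else Sum.inr (Sum.inr (Sum.inr ⟨(i : ℕ) - 1, by omega⟩))
  invFun w := match w with
    | Sum.inl j => if j = 0 then eVar ⟨0, by omega⟩ else sVar ⟨0, by omega⟩
    | Sum.inr v => coxEmb n v
  left_inv v := by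
    rcases v with _ | (⟨i, hi⟩ | ⟨i, hi⟩) <;> simp [coxEmb, eVar, sVar, lVar]
    · cases i with
      | zero => simp [eVar]
      | succ m => simp [coxEmb, eVar]
    · cases i with
      | zero => simp [sVar]
      | succ m => simp [coxEmb, sVar]
  right_inv w := by
    rcases w with j | (_ | (⟨i, hi⟩ | ⟨i, hi⟩))
    · fin_cases j <;> simp [eVar, sVar]
    · simp [coxEmb, lVar]
    · simp [coxEmb, eVar]
    · simp [coxEmb, sVar]

lemma coxSplit_comp_emb (n : ℕ) (hn : 3 ≤ n) :
    (coxSplit n hn) ∘ (coxEmb n) = Sum.inr := by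
  funext v
  rcases v with _ | (i | i) <;> simp [coxSplit, coxEmb, lVar, eVar, sVar]

lemma cox_rename_small (k : Type*) [Field k] (n : ℕ) (hn : 3 ≤ n) (a b : Fin (n - 2) → k)
    (j : Fin (n - 3)) :
    rename (coxEmb n) (coxRelSmall k n hn a b j)
      = coxRel k n hn a b ⟨(j : ℕ) + 1, by omega⟩ := by
  have e1 : (⟨n - 3 + 1, by omega⟩ : Fin n) = ⟨n - 2, by omega⟩ := Fin.mk_eq_mk.mpr (by omega)
  have e2 : (⟨n - 2 + 1, by omega⟩ : Fin n) = ⟨n - 1, by omega⟩ := Fin.mk_eq_mk.mpr (by omega)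
  simp only [coxRelSmall, coxRel, map_add, map_mul, rename_X, rename_C, coxEmb, eVar, sVar,
    Sum.elim_inr, Sum.elim_inl, Fin.castLE, Fin.val_mk, e1, e2]

/-- For `n ≥ 3` and nonzero scalars `aᵢ, bᵢ`, the elimination ideal
`J ∩ k[l, e₂, …, eₙ, s₂, …, sₙ]`, i.e. the preimage of `J = (g₁, …, g_{n-2})` under the
inclusion of the polynomial ring in the variables other than `s₁, e₁`, is the ideal
generated by `g₂, …, g_{n-2}`. -/
theorem stmt5 (k : Type*) [Field k] (n : ℕ) (hn : 3 ≤ n)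
    (a b : Fin (n - 2) → k) (ha : ∀ i, a i ≠ 0) (hb : ∀ i, b i ≠ 0) :
    Ideal.comap
        (rename (coxEmb n) : MvPolynomial (CoxVar (n - 1)) k →ₐ[k] MvPolynomial (CoxVar n) k)
        (Ideal.span (Set.range (coxRel k n hn a b)))
      = Ideal.span (Set.range (coxRelSmall k n hn a b)) := by
  set A := MvPolynomial (CoxVar (n - 1)) k
  set h : A := C (a ⟨0, by omega⟩) * X (sVar ⟨n - 3, by omega⟩) * X (eVar ⟨n - 3, by omega⟩)
      + C (b ⟨0, by omega⟩) * X (sVar ⟨n - 2, by omega⟩) * X (eVar ⟨n - 2, by omega⟩) with hh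
  set ψ : MvPolynomial (CoxVar n) k ≃ₐ[k] MvPolynomial (Fin 2) A :=
    (renameEquiv k (coxSplit n hn)).trans (sumAlgEquiv k (Fin 2) (CoxVar (n - 1))) with hψ
  have hψemb : ∀ f : A, ψ (rename (coxEmb n) f) = C f := by
    intro f
    show (sumAlgEquiv k (Fin 2) (CoxVar (n - 1)))
        (rename (coxSplit n hn) (rename (coxEmb n) f)) = C f
    rw [rename_rename, coxSplit_comp_emb n hn]
    have := AlgHom.congr_fun (sumAlgEquiv_comp_rename_inr k (Fin 2) (CoxVar (n - 1))) f
    simpa using this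
  have hg0 : ψ (coxRel k n hn a b ⟨0, by omega⟩) = X 0 * X 1 + C h := by
    have hdec : coxRel k n hn a b ⟨0, by omega⟩
        = X (sVar ⟨0, by omega⟩) * X (eVar ⟨0, by omega⟩) + rename (coxEmb n) h := by
      have e1 : (⟨n - 3 + 1, by omega⟩ : Fin n) = ⟨n - 2, by omega⟩ := Fin.mk_eq_mk.mpr (by omega)
      have e2 : (⟨n - 2 + 1, by omega⟩ : Fin n) = ⟨n - 1, by omega⟩ := Fin.mk_eq_mk.mpr (by omega)
      simp only [coxRel, hh, map_add, map_mul, rename_X, rename_C, coxEmb, eVar, sVar,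
        Sum.elim_inr, Sum.elim_inl, Fin.castLE, Fin.val_mk, e1, e2]
      ring
    rw [hdec, map_add, map_mul, hψemb h]
    have hs : ψ (X (sVar (⟨0, by omega⟩ : Fin n))) = X 1 := by
      show (sumAlgEquiv k (Fin 2) (CoxVar (n - 1)))
          (rename (coxSplit n hn) (X (sVar (⟨0, by omega⟩ : Fin n)))) = X 1
      rw [rename_X]
      have : coxSplit n hn (sVar (⟨0, by omega⟩ : Fin n)) = Sum.inl 1 := by
        simp [coxSplit, sVar]
      rw [this]
      exact sumAlgEquiv_X_inl k (Fin 2) (CoxVar (n - 1)) 1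
    have he : ψ (X (eVar (⟨0, by omega⟩ : Fin n))) = X 0 := by
      show (sumAlgEquiv k (Fin 2) (CoxVar (n - 1)))
          (rename (coxSplit n hn) (X (eVar (⟨0, by omega⟩ : Fin n)))) = X 0
      rw [rename_X]
      have : coxSplit n hn (eVar (⟨0, by omega⟩ : Fin n)) = Sum.inl 0 := by
        simp [coxSplit, eVar]
      rw [this]
      exact sumAlgEquiv_X_inl k (Fin 2) (CoxVar (n - 1)) 0
    rw [hs, he, mul_comm]
  set J := Ideal.span (Set.range (coxRel k n hn a b)) with hJ
  set Ismall := Ideal.span (Set.range (coxRelSmall k n hn a b)) with hIs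
  apply le_antisymm
  · intro f hf
    rw [Ideal.mem_comap] at hf
    have h1 : ψ (rename (coxEmb n) f) ∈ Ideal.map ψ J := Ideal.mem_map_of_mem _ hf
    rw [hψemb f] at h1
    have h2 : Ideal.map ψ J
        ≤ Ideal.span {X 0 * X 1 + C h} ⊔ Ismall.map (C : A →+* MvPolynomial (Fin 2) A) := by
      rw [hJ, Ideal.map_span]
      apply Ideal.span_le.mpr
      rintro _ ⟨_, ⟨i, rfl⟩, rfl⟩
      rcases i with ⟨iv, hiv⟩
      match iv, hiv with
      | 0, hiv =>
        rw [hg0]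
        exact Ideal.mem_sup_left (Ideal.subset_span rfl)
      | m + 1, hiv =>
        have : coxRel k n hn a b ⟨m + 1, hiv⟩
            = rename (coxEmb n) (coxRelSmall k n hn a b ⟨m, by omega⟩) :=
          (cox_rename_small k n hn a b ⟨m, by omega⟩).symm
        rw [this, hψemb]
        exact Ideal.mem_sup_right
          (Ideal.mem_map_of_mem _ (Ideal.subset_span ⟨⟨m, by omega⟩, rfl⟩))
    exact cox_elim h Ismall f (h2 h1)
  · apply Ideal.span_le.mpr
    rintro _ ⟨j, rfl⟩
    rw [SetLike.mem_coe, Ideal.mem_comap]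
    show rename (coxEmb n) (coxRelSmall k n hn a b j) ∈ J
    rw [cox_rename_small k n hn a b j]
    exact Ideal.subset_span ⟨_, rfl⟩
end

section
/- Let n ≥ 2 and let d, l, a_1, ..., a_n be non-negative integers with l ≤ d and d − l ≥ Σ_{i=1}^{n} max(a_i − l, 0). Then the number of tuples (s_1,...,s_n, e_1,...,e_n) of non-negative integers satisfying s_1 + ... + s_n = d − l, s_i + l = e_i + a_i for all i = 1,...,n, and s_i·e_i = 0 for all i = 1,...,n−2, is exactly d + 1 − l − Σ_{i=1}^{n} max(a_i − l, 0). -/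
/-- Let `n ≥ 2` and let `d, l, a₁, …, aₙ` be non-negative integers with `l ≤ d` and
`d − l ≥ Σᵢ max(aᵢ − l, 0)`. Then the number of tuples `(s₁,…,sₙ,e₁,…,eₙ)` of
non-negative integers with `s₁ + ⋯ + sₙ = d − l`, `sᵢ + l = eᵢ + aᵢ` for all `i`, and
`sᵢ·eᵢ = 0` for `i = 1, …, n−2`, is exactly `d + 1 − l − Σᵢ max(aᵢ − l, 0)`. -/
theorem stmt8 (n : ℕ) (hn : 2 ≤ n) (d l : ℕ) (a : Fin n → ℕ) (hl : l ≤ d)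
    (h : ∑ i, max ((a i : ℤ) - (l : ℤ)) 0 ≤ (d : ℤ) - (l : ℤ)) :
    (Nat.card {se : (Fin n → ℕ) × (Fin n → ℕ) //
        (∑ i, se.1 i) + l = d ∧
        (∀ i, se.1 i + l = se.2 i + a i) ∧
        (∀ i : Fin n, (i : ℕ) < n - 2 → se.1 i * se.2 i = 0)} : ℤ)
      = (d : ℤ) + 1 - (l : ℤ) - ∑ i, max ((a i : ℤ) - (l : ℤ)) 0 := by
  classical
  have hmax : ∀ i : Fin n, max ((a i : ℤ) - (l : ℤ)) 0 = ((a i - l : ℕ) : ℤ) := by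
    intro i; omega
  simp_rw [hmax] at h ⊢
  rw [← Nat.cast_sum] at h ⊢
  set m : Fin n → ℕ := fun i => a i - l with hm
  set S : ℕ := ∑ i, m i with hSdef
  have hmi : ∀ i, m i = a i - l := fun i => rfl
  have hS : l + S ≤ d := by omega
  set K : ℕ := d - l - S + 1 with hK
  have hn2 : n - 2 < n := by omega
  have hn1 : n - 1 < n := by omega
  set p : Fin n := ⟨n - 2, hn2⟩ with hp
  set q : Fin n := ⟨n - 1, hn1⟩ with hq
  have hpq : p ≠ q := by
    simp only [hp, hq, Ne, Fin.mk.injEq]; omega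
  have hqmem : q ∈ Finset.univ.erase p := Finset.mem_erase.2 ⟨hpq.symm, Finset.mem_univ q⟩
  have hmsum : m p + (m q + ∑ i ∈ (Finset.univ.erase p).erase q, m i) = S := by
    rw [Finset.add_sum_erase _ m hqmem, Finset.add_sum_erase _ m (Finset.mem_univ p)]
  -- generic facts about elements of the subtype
  have hfacts : ∀ s e : Fin n → ℕ, (∑ i, s i) + l = d → (∀ i, s i + l = e i + a i) →
      (∀ i : Fin n, (i : ℕ) < n - 2 → s i * e i = 0) →
      (∀ i, m i ≤ s i) ∧ (∀ i, i ≠ p → i ≠ q → s i = m i) ∧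
      s p + (s q + ∑ i ∈ (Finset.univ.erase p).erase q, m i) = d - l := by
    intro s e hsum hse hmul
    have h1 : ∀ i, m i ≤ s i := by
      intro i; have h1a := hse i; have h1b := hmi i; omega
    have h2 : ∀ i, i ≠ p → i ≠ q → s i = m i := by
      intro i hip hiq
      have hlt : (i : ℕ) < n - 2 := by
        have hv1 : (i : ℕ) ≠ n - 2 := fun hc => hip (Fin.ext hc)
        have hv2 : (i : ℕ) ≠ n - 1 := fun hc => hiq (Fin.ext hc)
        have := i.isLt; omega
      have hmul' := hmul i hlt
      rw [Nat.mul_eq_zero] at hmul'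
      have hse' := hse i
      have h1' := h1 i
      have hmi' := hmi i
      omega
    refine ⟨h1, h2, ?_⟩
    have hrs : ∑ i ∈ (Finset.univ.erase p).erase q, s i
        = ∑ i ∈ (Finset.univ.erase p).erase q, m i := by
      refine Finset.sum_congr rfl fun i hi => ?_
      rw [Finset.mem_erase, Finset.mem_erase] at hi
      exact h2 i hi.2.1 hi.1
    have e1 : s q + ∑ i ∈ (Finset.univ.erase p).erase q, s i
        = ∑ i ∈ Finset.univ.erase p, s i := Finset.add_sum_erase _ s hqmem
    have e2 : s p + ∑ i ∈ Finset.univ.erase p, s i = ∑ i, s i :=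
      Finset.add_sum_erase _ s (Finset.mem_univ p)
    omega
  have key : Nat.card {se : (Fin n → ℕ) × (Fin n → ℕ) //
      (∑ i, se.1 i) + l = d ∧
      (∀ i, se.1 i + l = se.2 i + a i) ∧
      (∀ i : Fin n, (i : ℕ) < n - 2 → se.1 i * se.2 i = 0)} = K := by
    apply Nat.card_eq_of_equiv_fin
    refine
      { toFun := fun x => ⟨x.1.1 p - m p, ?_⟩
        invFun := fun t =>
          ⟨⟨fun i => m i + ((if i = p then t.1 else 0) + (if i = q then K - 1 - t.1 else 0)),
            fun i => (m i + ((if i = p then t.1 else 0) + (if i = q then K - 1 - t.1 else 0)))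
              + l - a i⟩, ?_, ?_, ?_⟩
        left_inv := ?_
        right_inv := ?_ }
    · -- bound for toFun
      obtain ⟨⟨s, e⟩, hsum, hse, hmul⟩ := x
      obtain ⟨h1, h2, h3⟩ := hfacts s e hsum hse hmul
      have hb1 := h1 p; have hb2 := h1 q
      show s p - m p < K
      omega
    · -- sum condition for invFun
      simp only [Finset.sum_add_distrib, Finset.sum_ite_eq', Finset.mem_univ, if_true]
      have := t.isLt
      omega
    · -- linear condition
      intro i
      dsimp only
      have := hmi i
      split_ifs <;> omega
    · -- product condition
      intro i hlt
      have hip : i ≠ p := by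
        intro hc; rw [hc] at hlt; simp only [hp] at hlt; omega
      have hiq : i ≠ q := by
        intro hc; rw [hc] at hlt; simp only [hq] at hlt; omega
      dsimp only
      rw [if_neg hip, if_neg hiq]
      rw [Nat.mul_eq_zero]
      have := hmi i
      omega
    · -- left inverse
      rintro ⟨⟨s, e⟩, hsum, hse, hmul⟩
      obtain ⟨h1, h2, h3⟩ := hfacts s e hsum hse hmul
      have hsp := h1 p
      have hsq := h1 q
      have htlt : s p - m p < K := by omega
      have hs' : (fun i => m i + ((if i = p then s p - m p else 0)
          + (if i = q then K - 1 - (s p - m p) else 0))) = s := by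
        funext i
        by_cases hip : i = p
        · subst hip
          rw [if_pos rfl, if_neg hpq]
          omega
        · by_cases hiq : i = q
          · subst hiq
            rw [if_neg hip, if_pos rfl]
            omega
          · rw [if_neg hip, if_neg hiq]
            exact (h2 i hip hiq).symm
      refine Subtype.ext (Prod.ext ?_ ?_)
      · exact hs'
      · funext i
        show (m i + ((if i = p then s p - m p else 0)
          + (if i = q then K - 1 - (s p - m p) else 0))) + l - a i = e i
        have hsi := congrFun hs' i
        have hse' : s i + l = e i + a i := hse i
        have h1' := h1 i
        omega
    · -- right inverse
      rintro ⟨t, ht⟩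
      apply Fin.ext
      show (m p + ((if p = p then t else 0) + (if p = q then K - 1 - t else 0))) - m p = t
      rw [if_pos rfl, if_neg hpq]
      omega
  rw [key]
  push_cast
  omega
end

section
/- Let n ≥ 2 and let d, a_1, ..., a_n be non-negative integers with d ≥ a_1 + ... + a_n. Then the number of tuples (c, s_1,...,s_n, e_1,...,e_n) of non-negative integers satisfying c + s_1 + ... + s_n = d, s_i + c = e_i + a_i for all i = 1,...,n, and s_i·e_i = 0 for all i = 1,...,n−2, equals C(d+2, 2) − Σ_{i=1}^{n} C(a_i + 1, 2), where C(m, 2) = m(m−1)/2. -/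
open Finset

private lemma sum_range_id' (n : ℕ) : ∑ i ∈ range n, i = n.choose 2 := by
  induction n with
  | zero => simp
  | succ n ih =>
    rw [Finset.sum_range_succ, ih, Nat.choose_succ_succ n 1, Nat.choose_one_right]
    exact Nat.add_comm _ _

private lemma sum_sub_eq_choose (m d : ℕ) (h : m ≤ d) :
    ∑ c ∈ range (d + 1), (m - c) = (m + 1).choose 2 := by
  have h1 : ∑ c ∈ range (d + 1), (m - c) = ∑ c ∈ range (m + 1), (m - c) :=
    (Finset.sum_subset (by intro x hx; simp at *; omega)
      (by intro x hx hx2; simp at *; omega)).symm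
  rw [h1, ← sum_range_id' (m + 1)]
  calc ∑ c ∈ range (m + 1), (m - c)
      = ∑ j ∈ range (m + 1), (m + 1 - 1 - j) := by
        apply Finset.sum_congr rfl; intros; omega
    _ = ∑ j ∈ range (m + 1), j := Finset.sum_range_reflect (fun j => j) (m + 1)

private lemma keyineq {n : ℕ} (d c : ℕ) (a : Fin n → ℕ) (hd : ∑ i, a i ≤ d)
    (hc : c ≤ d) : c + ∑ i, (a i - c) ≤ d := by
  by_cases h : ∃ i, c < a i
  · obtain ⟨i, hi⟩ := h
    have e1 : a i - c + ∑ j ∈ univ.erase i, (a j - c) = ∑ j, (a j - c) :=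
      Finset.add_sum_erase univ (fun j => a j - c) (mem_univ i)
    have e2 : ∑ j ∈ univ.erase i, (a j - c) ≤ ∑ j ∈ univ.erase i, a j :=
      Finset.sum_le_sum fun j _ => Nat.sub_le _ _
    have e3 : a i + ∑ j ∈ univ.erase i, a j = ∑ j, a j :=
      Finset.add_sum_erase univ a (mem_univ i)
    omega
  · push_neg at h
    have : ∑ i, (a i - c) = 0 := Finset.sum_eq_zero fun i _ => by
      have := h i; omega
    omega

private lemma sum_eq_pair' {α : Type*} [Fintype α] [DecidableEq α] {i₀ i₁ : α}
    (hne : i₀ ≠ i₁) (t : α → ℕ) (h : ∀ i, i ≠ i₀ → i ≠ i₁ → t i = 0) :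
    ∑ i, t i = t i₀ + t i₁ := by
  rw [← Finset.sum_pair hne]
  exact (Finset.sum_subset (Finset.subset_univ _) (fun x _ hx => by
    simp only [Finset.mem_insert, Finset.mem_singleton, not_or] at hx
    exact h x hx.1 hx.2)).symm

private lemma forced {n : ℕ} (hn : 2 ≤ n) (a : Fin n → ℕ) (c : ℕ) (s e : Fin n → ℕ)
    (h2 : ∀ i, s i + c = e i + a i) (h3 : ∀ i : Fin n, (i : ℕ) < n - 2 → s i * e i = 0)
    (i : Fin n) (h0 : i ≠ (⟨n - 2, by omega⟩ : Fin n)) (h1 : i ≠ (⟨n - 1, by omega⟩ : Fin n)) :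
    s i = a i - c := by
  have hv0 : (i : ℕ) ≠ n - 2 := fun h => h0 (Fin.ext h)
  have hv1 : (i : ℕ) ≠ n - 1 := fun h => h1 (Fin.ext h)
  have hi : (i : ℕ) < n - 2 := by have := i.2; omega
  rcases Nat.mul_eq_zero.mp (h3 i hi) with h | h <;> (have := h2 i; omega)

private lemma card_tuples (n : ℕ) (hn : 2 ≤ n) (d : ℕ) (a : Fin n → ℕ)
    (hd : (∑ i, a i) ≤ d) :
    Nat.card {cse : ℕ × (Fin n → ℕ) × (Fin n → ℕ) //
        cse.1 + (∑ i, cse.2.1 i) = d ∧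
        (∀ i, cse.2.1 i + cse.1 = cse.2.2 i + a i) ∧
        (∀ i : Fin n, (i : ℕ) < n - 2 → cse.2.1 i * cse.2.2 i = 0)}
      = ∑ c ∈ range (d + 1), (d - (c + ∑ i, (a i - c)) + 1) := by
  classical
  set i₀ : Fin n := ⟨n - 2, by omega⟩ with hi₀
  set i₁ : Fin n := ⟨n - 1, by omega⟩ with hi₁
  have hne : i₀ ≠ i₁ := by
    rw [hi₀, hi₁]
    intro h
    rw [Fin.mk.injEq] at h
    omega
  have E : {cse : ℕ × (Fin n → ℕ) × (Fin n → ℕ) //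
        cse.1 + (∑ i, cse.2.1 i) = d ∧
        (∀ i, cse.2.1 i + cse.1 = cse.2.2 i + a i) ∧
        (∀ i : Fin n, (i : ℕ) < n - 2 → cse.2.1 i * cse.2.2 i = 0)} ≃
      Σ c : Fin (d + 1), ↥(Finset.HasAntidiagonal.antidiagonal (d - ((c : ℕ) + ∑ i, (a i - (c : ℕ))))) :=
    { toFun := fun x =>
        ⟨⟨x.1.1, by have h1 := x.2.1; omega⟩,
          ⟨(x.1.2.1 i₀ - (a i₀ - x.1.1), x.1.2.1 i₁ - (a i₁ - x.1.1)), by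
            obtain ⟨⟨c, s, e⟩, hx1, hx2, hx3⟩ := x
            have h1 : c + ∑ i, s i = d := hx1
            have h2 : ∀ i, s i + c = e i + a i := hx2
            have h3 : ∀ i : Fin n, (i : ℕ) < n - 2 → s i * e i = 0 := hx3
            rw [Finset.HasAntidiagonal.mem_antidiagonal]
            show (s i₀ - (a i₀ - c)) + (s i₁ - (a i₁ - c)) = d - (c + ∑ i, (a i - c))
            have hs : ∀ i, a i - c ≤ s i := fun i => by have h := h2 i; omega
            have hsum : ∑ i, s i =
                (∑ i, (a i - c)) + ((s i₀ - (a i₀ - c)) + (s i₁ - (a i₁ - c))) := by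
              calc ∑ i, s i = ∑ i, ((a i - c) + (s i - (a i - c))) :=
                    Finset.sum_congr rfl (fun i _ => by have h := hs i; omega)
                _ = (∑ i, (a i - c)) + ∑ i, (s i - (a i - c)) := Finset.sum_add_distrib
                _ = _ := by
                    rw [sum_eq_pair' hne (fun i => s i - (a i - c)) (fun i hx0 hx1 => by
                      show s i - (a i - c) = 0
                      rw [forced hn a c s e h2 h3 i hx0 hx1]; omega)]
            omega⟩⟩,
      invFun := fun y =>
        ⟨⟨y.1.1, fun i => (a i - y.1.1) +
            ((if i = i₀ then y.2.1.1 else 0) + (if i = i₁ then y.2.1.2 else 0)),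
          fun i => ((a i - y.1.1) +
            ((if i = i₀ then y.2.1.1 else 0) + (if i = i₁ then y.2.1.2 else 0))) + y.1.1 - a i⟩,
          by
            obtain ⟨⟨c, hc⟩, ⟨⟨u, v⟩, huv⟩⟩ := y
            rw [Finset.HasAntidiagonal.mem_antidiagonal] at huv
            have huv' : u + v = d - (c + ∑ i, (a i - c)) := huv
            refine ⟨?_, ?_, ?_⟩
            · show c + ∑ i, ((a i - c) +
                ((if i = i₀ then u else 0) + (if i = i₁ then v else 0))) = d
              have hkey : c + ∑ i, (a i - c) ≤ d := keyineq d c a hd (by omega)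
              rw [Finset.sum_add_distrib, Finset.sum_add_distrib,
                Finset.sum_ite_eq' univ i₀ (fun _ => u),
                Finset.sum_ite_eq' univ i₁ (fun _ => v)]
              simp only [Finset.mem_univ, if_true]
              omega
            · intro i
              show (a i - c) + ((if i = i₀ then u else 0) + (if i = i₁ then v else 0)) + c
                = ((a i - c) + ((if i = i₀ then u else 0) + (if i = i₁ then v else 0))) + c
                  - a i + a i
              have h : a i - c ≤ (a i - c) +
                  ((if i = i₀ then u else 0) + (if i = i₁ then v else 0)) :=
                Nat.le_add_right _ _
              omega
            · intro i hi
              show ((a i - c) + ((if i = i₀ then u else 0) + (if i = i₁ then v else 0))) *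
                (((a i - c) + ((if i = i₀ then u else 0) + (if i = i₁ then v else 0))) + c
                  - a i) = 0
              have h0 : i ≠ i₀ := fun h => by
                rw [h, hi₀] at hi; simp only [] at hi; omega
              have h1 : i ≠ i₁ := fun h => by
                rw [h, hi₁] at hi; simp only [] at hi; omega
              rw [if_neg h0, if_neg h1]
              rcases Nat.le_total c (a i) with h | h
              · have hz : (a i - c) + (0 + 0) + c - a i = 0 := by omega
                rw [hz, Nat.mul_zero]
              · have hz : a i - c = 0 := by omega
                rw [hz]
                simp⟩,
      left_inv := fun x => by
        obtain ⟨⟨c, s, e⟩, hx1, hx2, hx3⟩ := x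
        have h2 : ∀ i, s i + c = e i + a i := hx2
        have hs : ∀ i, a i - c ≤ s i := fun i => by have h := h2 i; omega
        apply Subtype.ext
        refine Prod.ext rfl (Prod.ext (funext fun i => ?_) (funext fun i => ?_))
        · show (a i - c) + ((if i = i₀ then s i₀ - (a i₀ - c) else 0) +
            (if i = i₁ then s i₁ - (a i₁ - c) else 0)) = s i
          by_cases hI0 : i = i₀
          · rw [hI0, if_pos rfl, if_neg hne]
            have ha := hs i₀
            omega
          · by_cases hI1 : i = i₁
            · rw [hI1, if_neg (Ne.symm hne), if_pos rfl]
              have ha := hs i₁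
              omega
            · rw [if_neg hI0, if_neg hI1]
              have hf := forced hn a c s e h2 hx3 i hI0 hI1
              omega
        · show ((a i - c) + ((if i = i₀ then s i₀ - (a i₀ - c) else 0) +
            (if i = i₁ then s i₁ - (a i₁ - c) else 0))) + c - a i = e i
          by_cases hI0 : i = i₀
          · rw [hI0, if_pos rfl, if_neg hne]
            have ha := hs i₀
            have hb := h2 i₀
            omega
          · by_cases hI1 : i = i₁
            · rw [hI1, if_neg (Ne.symm hne), if_pos rfl]
              have ha := hs i₁
              have hb := h2 i₁
              omega
            · rw [if_neg hI0, if_neg hI1]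
              have hf := forced hn a c s e h2 hx3 i hI0 hI1
              have hb := h2 i
              omega
      right_inv := fun y => by
        obtain ⟨⟨c, hc⟩, ⟨⟨u, v⟩, huv⟩⟩ := y
        refine Sigma.ext rfl (heq_of_eq (Subtype.ext (Prod.ext ?_ ?_)))
        · show (a i₀ - c) + ((if i₀ = i₀ then u else 0) + (if i₀ = i₁ then v else 0))
            - (a i₀ - c) = u
          rw [if_pos rfl, if_neg hne]
          omega
        · show (a i₁ - c) + ((if i₁ = i₀ then u else 0) + (if i₁ = i₁ then v else 0))
            - (a i₁ - c) = v
          rw [if_neg (Ne.symm hne), if_pos rfl]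
          omega }
  rw [Nat.card_congr E, Nat.card_eq_fintype_card, Fintype.card_sigma]
  simp only [Fintype.card_coe, Finset.Nat.card_antidiagonal]
  exact Fin.sum_univ_eq_sum_range (fun c => d - (c + ∑ i, (a i - c)) + 1) (d + 1)

/-- Let `n ≥ 2` and let `d, a₁, …, aₙ` be non-negative integers with `d ≥ a₁ + ⋯ + aₙ`.
Then the number of tuples `(c, s₁,…,sₙ, e₁,…,eₙ)` of non-negative integers with
`c + s₁ + ⋯ + sₙ = d`, `sᵢ + c = eᵢ + aᵢ` for all `i`, and `sᵢ·eᵢ = 0` for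
`i = 1, …, n−2`, equals `C(d+2, 2) − Σᵢ C(aᵢ+1, 2)`. -/
theorem stmt9 (n : ℕ) (hn : 2 ≤ n) (d : ℕ) (a : Fin n → ℕ)
    (hd : (∑ i, a i) ≤ d) :
    (Nat.card {cse : ℕ × (Fin n → ℕ) × (Fin n → ℕ) //
        cse.1 + (∑ i, cse.2.1 i) = d ∧
        (∀ i, cse.2.1 i + cse.1 = cse.2.2 i + a i) ∧
        (∀ i : Fin n, (i : ℕ) < n - 2 → cse.2.1 i * cse.2.2 i = 0)} : ℤ)
      = ((d + 2).choose 2 : ℤ) - ∑ i, (((a i) + 1).choose 2 : ℤ) := by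
  rw [card_tuples n hn d a hd, Nat.cast_sum]
  have step : ∀ c ∈ range (d + 1), ((d - (c + ∑ i, (a i - c)) + 1 : ℕ) : ℤ)
      = ((d + 1 - c : ℕ) : ℤ) - ∑ i, ((a i - c : ℕ) : ℤ) := by
    intro c hc
    rw [Finset.mem_range] at hc
    have h1 : c + ∑ i, (a i - c) ≤ d := keyineq d c a hd (by omega)
    have h3 : ((∑ i, (a i - c) : ℕ) : ℤ) = ∑ i, ((a i - c : ℕ) : ℤ) := Nat.cast_sum _ _
    rw [← h3]
    omega
  rw [Finset.sum_congr rfl step, Finset.sum_sub_distrib]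
  have hfst : ∑ c ∈ range (d + 1), ((d + 1 - c : ℕ) : ℤ) = ((d + 2).choose 2 : ℤ) := by
    have h := sum_sub_eq_choose (d + 1) (d + 1) le_rfl
    rw [Finset.sum_range_succ] at h
    simp only [Nat.sub_self, add_zero] at h
    rw [← Nat.cast_sum, h]
  have hsnd : ∑ c ∈ range (d + 1), ∑ i, ((a i - c : ℕ) : ℤ)
      = ∑ i, (((a i) + 1).choose 2 : ℤ) := by
    rw [Finset.sum_comm]
    refine Finset.sum_congr rfl fun i _ => ?_
    have hai : a i ≤ d :=
      le_trans (Finset.single_le_sum (fun j _ => Nat.zero_le (a j)) (Finset.mem_univ i)) hd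
    rw [← Nat.cast_sum, sum_sub_eq_choose (a i) d hai]
  rw [hfst, hsnd]
end
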